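/- arXiv:2001.10640 — 4 statements merged into one kernel-verified Lean document; each statement's English description precedes it below -/
import Mathlib

section
/- Let m ≥ 1, let l_1,…,l_m and l'_1,…,l'_m be nonnegative real numbers with l_1 > 0, and let a_1,…,a_m be reals with 1 ≥ a_1 ≥ a_2 ≥ ⋯ ≥ a_m ≥ 0 and a_1 > 0. Then (Σ_{j=1}^m a_j l'_j) / (Σ_{j=1}^m a_j l_j) ≤ max_{1 ≤ k ≤ m} (Σ_{j=1}^k l'_j) / (Σ_{j=1}^k l_j). In particular, the ratio of weighted sums with decreasing weights is bounded by the maximum ratio of prefix sums. -/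
/-- a ratio of weighted sums with decreasing nonnegative weights is bounded
by the maximum ratio of prefix sums. -/
theorem ratio_le_max_prefix_ratio
    (m : ℕ) (hm : 1 ≤ m)
    (l l' a : ℕ → ℝ)
    (hl : ∀ j, 0 ≤ l j) (hl' : ∀ j, 0 ≤ l' j) (hl1 : 0 < l 1)
    (ha_top : a 1 ≤ 1) (ha_pos : 0 < a 1) (ha_bot : 0 ≤ a m)
    (ha_mono : ∀ j, 1 ≤ j → j < m → a (j + 1) ≤ a j) :
    (∑ j ∈ Finset.Icc 1 m, a j * l' j) / (∑ j ∈ Finset.Icc 1 m, a j * l j) ≤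
      (Finset.Icc 1 m).sup' (Finset.nonempty_Icc.mpr hm)
        (fun k => (∑ j ∈ Finset.Icc 1 k, l' j) / (∑ j ∈ Finset.Icc 1 k, l j)) := by
  set P : ℕ → ℝ := fun k => ∑ j ∈ Finset.Icc 1 k, l j with hP
  set P' : ℕ → ℝ := fun k => ∑ j ∈ Finset.Icc 1 k, l' j with hP'
  set M : ℝ := (Finset.Icc 1 m).sup' (Finset.nonempty_Icc.mpr hm)
        (fun k => (∑ j ∈ Finset.Icc 1 k, l' j) / (∑ j ∈ Finset.Icc 1 k, l j)) with hM
  -- prefix sums of l are positive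
  have hPpos : ∀ k, 1 ≤ k → 0 < P k := by
    intro k hk
    have h1 : (1 : ℕ) ∈ Finset.Icc 1 k := Finset.mem_Icc.mpr ⟨le_refl 1, hk⟩
    exact Finset.sum_pos' (fun j _ => hl j) ⟨1, h1, hl1⟩
  -- key bound: P' k ≤ M * P k for k ∈ [1, m]
  have hkey : ∀ k, 1 ≤ k → k ≤ m → P' k ≤ M * P k := by
    intro k hk1 hkm
    have hmem : k ∈ Finset.Icc 1 m := Finset.mem_Icc.mpr ⟨hk1, hkm⟩
    have := Finset.le_sup' (fun k => (∑ j ∈ Finset.Icc 1 k, l' j) / (∑ j ∈ Finset.Icc 1 k, l j)) hmem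
    rw [← hM] at this
    have hpos := hPpos k hk1
    calc P' k = (P' k / P k) * P k := by field_simp
    _ ≤ M * P k := mul_le_mul_of_nonneg_right this hpos.le
  -- a is antitone on [1, m]
  have hanti : ∀ j k, 1 ≤ j → j ≤ k → k ≤ m → a k ≤ a j := by
    intro j k hj hjk
    induction k, hjk using Nat.le_induction with
    | base => exact fun _ => le_refl _
    | succ n hn ih =>
      exact fun hkm => le_trans (ha_mono n (le_trans hj hn) (by omega)) (ih (by omega))
  have hanonneg : ∀ j, 1 ≤ j → j ≤ m → 0 ≤ a j := fun j hj hjm =>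
    le_trans ha_bot (hanti j m hj hjm le_rfl)
  -- main induction: S k - a k * P' k ≤ M * (T k - a k * P k)
  have hmain : ∀ k, 1 ≤ k → k ≤ m →
      (∑ j ∈ Finset.Icc 1 k, a j * l' j) - a k * P' k ≤
      M * ((∑ j ∈ Finset.Icc 1 k, a j * l j) - a k * P k) := by
    intro k hk1
    induction k, hk1 using Nat.le_induction with
    | base =>
      intro _
      simp [hP, hP']
    | succ n hn ih =>
      intro hnm
      have hnm' : n ≤ m := by omega
      have ih' := ih hnm'
      have h1n : 1 ≤ n + 1 := by omega
      rw [Finset.sum_Icc_succ_top h1n, Finset.sum_Icc_succ_top h1n]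
      have hPs : P (n+1) = P n + l (n+1) := Finset.sum_Icc_succ_top h1n _
      have hP's : P' (n+1) = P' n + l' (n+1) := Finset.sum_Icc_succ_top h1n _
      rw [hPs, hP's]
      have hd : 0 ≤ a n - a (n+1) := by
        have := ha_mono n hn (by omega)
        linarith
      have hPP : (a n - a (n+1)) * P' n ≤ (a n - a (n+1)) * (M * P n) :=
        mul_le_mul_of_nonneg_left (hkey n hn hnm') hd
      have hexp : M * ((∑ j ∈ Finset.Icc 1 n, a j * l j) + a (n+1) * l (n+1)
          - a (n+1) * (P n + l (n+1)))
          = M * ((∑ j ∈ Finset.Icc 1 n, a j * l j) - a n * P n)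
            + (a n - a (n+1)) * (M * P n) := by ring
      rw [hexp]
      linarith [ih', hPP]
  have hSm := hmain m hm le_rfl
  have hPm := hkey m hm le_rfl
  have hS_le : (∑ j ∈ Finset.Icc 1 m, a j * l' j) ≤ M * (∑ j ∈ Finset.Icc 1 m, a j * l j) := by
    nlinarith [mul_le_mul_of_nonneg_left hPm ha_bot]
  have hTpos : 0 < ∑ j ∈ Finset.Icc 1 m, a j * l j := by
    have h1 : (1 : ℕ) ∈ Finset.Icc 1 m := Finset.mem_Icc.mpr ⟨le_refl 1, hm⟩
    refine Finset.sum_pos' (fun j hj => ?_) ⟨1, h1, mul_pos ha_pos hl1⟩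
    rcases Finset.mem_Icc.mp hj with ⟨hj1, hjm⟩
    exact mul_nonneg (hanonneg j hj1 hjm) (hl j)
  rw [div_le_iff₀ hTpos]
  linarith [hS_le]
end

section
/- Fix the reported preference orders of all agents in the Probabilistic Serial mechanism, a time t ≥ 0, a subset S of the agents, and a duration δ ≥ 0. In the pause scenario, the eating process runs as normal except that during the interval [t, t+δ] the agents in S eat at rate 0 (while the other agents continue to eat as normal), and after time t+δ all agents resume the normal rules. Then for every item j and every time s ≥ t, the remaining supply of item j at time s in the pause scenario is at least the remaining supply of item j at time s in the normal (unpaused) scenario. -/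
open Set


open MeasureTheory

/-- An execution of the Probabilistic Serial eating process with `n` agents and `m` items
(each of supply 1).  Agent `i` reports the strict preference order encoded by the injective
rank function `rk i` (`rk i j < rk i j'` means agent `i` ranks item `j` above item `j'`).
`active i t` tells whether agent `i` participates (eats at rate 1) at time `t`; the normal
scenario is `active = fun _ _ => True`, pausing/removing agents is modelled by making them
inactive.  `eats i t = some j` means agent `i` is eating item `j` at time `t`, and `rem j t`
is the remaining supply of item `j` at time `t`: it equals `1` minus the total time agents
have spent eating `j` during `(0, t]`.  An active agent always eats its most preferred item
among those with positive remaining supply. -/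
structure PSExec (n m : ℕ) (rk : Fin n → Fin m → ℕ) (active : Fin n → ℝ → Prop) where
  eats : Fin n → ℝ → Option (Fin m)
  rem : Fin m → ℝ → ℝ
  meas : ∀ i j, MeasurableSet {t : ℝ | eats i t = some j}
  rem_def : ∀ j, ∀ t : ℝ, 0 ≤ t →
    rem j t = 1 - ∑ i : Fin n,
      (volume {s : ℝ | 0 < s ∧ s ≤ t ∧ eats i s = some j}).toReal
  eats_iff : ∀ i, ∀ t : ℝ, 0 ≤ t → active i t → ∀ j,
    (eats i t = some j ↔ 0 < rem j t ∧ ∀ j', 0 < rem j' t → rk i j ≤ rk i j')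
  eats_none : ∀ i, ∀ t : ℝ, ¬ active i t → eats i t = none

namespace PSExec

variable {n m : ℕ} {rk : Fin n → Fin m → ℕ} {active : Fin n → ℝ → Prop}

/-- The total amount of item `j` eaten by agent `i` (the allocation `x i j`). -/
noncomputable def alloc (E : PSExec n m rk active) (i : Fin n) (j : Fin m) : ℝ :=
  (volume {s : ℝ | 0 < s ∧ E.eats i s = some j}).toReal

/-- The expected utility of agent `i` with cardinal utilities `a`. -/
noncomputable def utility (E : PSExec n m rk active) (a : Fin m → ℝ) (i : Fin n) : ℝ :=
  ∑ j, a j * E.alloc i j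

/-- Item `j` is exhausted exactly at time `τ`. -/
def exhaustedAt (E : PSExec n m rk active) (j : Fin m) (τ : ℝ) : Prop :=
  0 < τ ∧ E.rem j τ = 0 ∧ ∀ s : ℝ, 0 ≤ s → s < τ → 0 < E.rem j s

/-- Agent `i` is eating item `j` at the moment `τ`, in the left-limit sense (this is the
sense used for "eating an item at the moment of its exhaustion"). -/
def eatsAt (E : PSExec n m rk active) (i : Fin n) (j : Fin m) (τ : ℝ) : Prop :=
  ∃ δ > 0, ∀ s : ℝ, τ - δ < s → s < τ → E.eats i s = some j

/-- `T` is the exact moment at which the last item of `Obar` is exhausted. -/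
def exhaustTime (E : PSExec n m rk active) (Obar : Finset (Fin m)) (T : ℝ) : Prop :=
  (∀ j ∈ Obar, E.rem j T = 0) ∧ ∀ s : ℝ, 0 ≤ s → s < T → ∃ j ∈ Obar, 0 < E.rem j s

end PSExec

/-- Dichotomous cardinal utilities with interest set `Obar`. -/
def dicho {m : ℕ} (Obar : Finset (Fin m)) : Fin m → ℝ :=
  fun j => if j ∈ Obar then 1 else 0


lemma bdd_integrableOn (g : ℝ → ℝ) (hg : Measurable g) (C : ℝ) (hb : ∀ u, |g u| ≤ C)
    (T : Set ℝ) (hT : MeasureTheory.volume T < ⊤) : MeasureTheory.IntegrableOn g T :=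
  MeasureTheory.Integrable.mono' (g := fun _ => C)
    (MeasureTheory.integrableOn_const hT.ne)
    hg.aestronglyMeasurable.restrict
    (MeasureTheory.ae_of_all _ fun u => by simpa using hb u)

lemma key_analysis (g : ℝ → ℝ) (hg : Measurable g) (C : ℝ) (hb : ∀ u, |g u| ≤ C)
    (f : ℝ → ℝ) (hf : f = fun x => ∫ u in (0:ℝ)..x, g u)
    (s : ℝ) (hs : 0 ≤ s) :
    max (f s) 0 ≤ ∫ u in Set.Ioc 0 s, ({v : ℝ | 0 < f v}.indicator g) u := by
  classical
  have hgi : ∀ a b : ℝ, IntervalIntegrable g volume a b := by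
    intro a b
    constructor <;> exact bdd_integrableOn g hg C hb _ measure_Ioc_lt_top
  have hcont : Continuous f := by
    rw [hf]; exact intervalIntegral.continuous_primitive hgi 0
  have hf0 : f 0 = 0 := by simp [hf]
  have hIoc : ∀ a b : ℝ, a ≤ b → ∫ u in Ioc a b, g u = f b - f a := by
    intro a b hab
    rw [← intervalIntegral.integral_of_le hab, hf]
    have h2 := intervalIntegral.integral_add_adjacent_intervals (hgi 0 a) (hgi a b)
    simp only []
    linarith
  have hIntOn : ∀ a b : ℝ, IntegrableOn g (Ioc a b) := fun a b => (hgi a b).1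
  -- the last nonpositive point before s
  have hZclosed : IsClosed (Icc 0 s ∩ {v : ℝ | f v ≤ 0}) :=
    isClosed_Icc.inter (isClosed_le hcont continuous_const)
  have hZcpt : IsCompact (Icc 0 s ∩ {v : ℝ | f v ≤ 0}) :=
    isCompact_Icc.of_isClosed_subset hZclosed inter_subset_left
  have hZne : (Icc 0 s ∩ {v : ℝ | f v ≤ 0}).Nonempty := ⟨0, ⟨le_refl 0, hs⟩, hf0.le⟩
  set c := sSup (Icc 0 s ∩ {v : ℝ | f v ≤ 0}) with hc
  have hcZ : c ∈ Icc 0 s ∩ {v : ℝ | f v ≤ 0} := hZcpt.sSup_mem hZne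
  obtain ⟨⟨hc0, hcs⟩, hfc⟩ := hcZ
  have hgt : ∀ u, c < u → u ≤ s → 0 < f u := by
    intro u hcu hus
    by_contra h
    exact absurd (le_csSup hZcpt.bddAbove ⟨⟨hc0.trans hcu.le, hus⟩, not_lt.1 h⟩) (not_le.2 hcu)
  have hmeasP : MeasurableSet {v : ℝ | 0 < f v} :=
    (isOpen_lt continuous_const hcont).measurableSet
  have hIndInt : ∀ a b : ℝ, IntegrableOn ({v : ℝ | 0 < f v}.indicator g) (Ioc a b) :=
    fun a b => (hIntOn a b).indicator hmeasP
  have hsplit : ∫ u in Ioc 0 s, ({v : ℝ | 0 < f v}.indicator g) u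
      = (∫ u in Ioc 0 c, ({v : ℝ | 0 < f v}.indicator g) u)
        + ∫ u in Ioc c s, ({v : ℝ | 0 < f v}.indicator g) u := by
    rw [← Ioc_union_Ioc_eq_Ioc hc0 hcs]
    exact setIntegral_union (Ioc_disjoint_Ioc_of_le le_rfl) measurableSet_Ioc (hIndInt 0 c) (hIndInt c s)
  have hP2 : ∫ u in Ioc c s, ({v : ℝ | 0 < f v}.indicator g) u = f s - f c := by
    rw [← hIoc c s hcs]
    refine setIntegral_congr_fun measurableSet_Ioc fun u hu => ?_
    exact Set.indicator_of_mem (show u ∈ {v : ℝ | 0 < f v} from hgt u hu.1 hu.2) g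
  have hP1 : ∫ u in Ioc 0 c, ({v : ℝ | 0 < f v}.indicator g) u = 0 := by
    rw [setIntegral_indicator hmeasP]
    have hUeq : Ioc 0 c ∩ {v : ℝ | 0 < f v} = Ioo 0 c ∩ {v : ℝ | 0 < f v} := by
      apply Subset.antisymm
      · rintro u ⟨⟨hu0, huc⟩, hfu⟩
        rcases eq_or_lt_of_le huc with rfl | h
        · simp only [mem_setOf_eq] at hfu
          exact absurd hfu (not_lt.2 hfc)
        · exact ⟨⟨hu0, h⟩, hfu⟩
      · rintro u ⟨⟨hu0, huc⟩, hfu⟩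
        exact ⟨⟨hu0, huc.le⟩, hfu⟩
    rw [hUeq]
    set U : Set ℝ := Ioo 0 c ∩ {v : ℝ | 0 < f v} with hUdef
    set AA : ℝ → ℝ := fun x => sSup (Icc 0 x ∩ {v : ℝ | f v ≤ 0}) with hAA
    set BB : ℝ → ℝ := fun x => sInf (Icc x c ∩ {v : ℝ | f v ≤ 0}) with hBB
    have hAmem : ∀ x ∈ U, AA x ∈ Icc 0 x ∩ {v : ℝ | f v ≤ 0} := by
      intro x hx
      have hcl : IsClosed (Icc 0 x ∩ {v : ℝ | f v ≤ 0}) :=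
        isClosed_Icc.inter (isClosed_le hcont continuous_const)
      have hcpt : IsCompact (Icc 0 x ∩ {v : ℝ | f v ≤ 0}) :=
        isCompact_Icc.of_isClosed_subset hcl inter_subset_left
      exact hcpt.sSup_mem ⟨0, ⟨le_refl 0, hx.1.1.le⟩, hf0.le⟩
    have hBmem : ∀ x ∈ U, BB x ∈ Icc x c ∩ {v : ℝ | f v ≤ 0} := by
      intro x hx
      have hcl : IsClosed (Icc x c ∩ {v : ℝ | f v ≤ 0}) :=
        isClosed_Icc.inter (isClosed_le hcont continuous_const)
      have hcpt : IsCompact (Icc x c ∩ {v : ℝ | f v ≤ 0}) :=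
        isCompact_Icc.of_isClosed_subset hcl inter_subset_left
      exact hcpt.sInf_mem ⟨c, ⟨hx.1.2.le, le_refl c⟩, hfc⟩
    have hself : ∀ x ∈ U, x ∈ Ioo (AA x) (BB x) := by
      intro x hx
      constructor
      · refine lt_of_le_of_ne (hAmem x hx).1.2 fun h => ?_
        have h2 : f x ≤ 0 := by rw [← h]; exact (hAmem x hx).2
        exact absurd h2 (not_le.2 (hx.2 : 0 < f x))
      · refine lt_of_le_of_ne (hBmem x hx).1.1 fun h => ?_
        have h2 : f x ≤ 0 := by rw [h]; exact (hBmem x hx).2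
        exact absurd h2 (not_le.2 (hx.2 : 0 < f x))
    have hmid : ∀ x ∈ U, ∀ y ∈ Ioo (AA x) (BB x), 0 < f y := by
      intro x hx y hy
      by_contra hfy
      rcases le_total y x with h1 | h1
      · have hm : y ∈ Icc 0 x ∩ {v : ℝ | f v ≤ 0} :=
          ⟨⟨(hAmem x hx).1.1.trans hy.1.le, h1⟩, not_lt.1 hfy⟩
        exact absurd (le_csSup (BddAbove.mono inter_subset_left bddAbove_Icc) hm) (not_le.2 hy.1)
      · have hm : y ∈ Icc x c ∩ {v : ℝ | f v ≤ 0} :=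
          ⟨⟨h1, hy.2.le.trans (hBmem x hx).1.2⟩, not_lt.1 hfy⟩
        exact absurd (csInf_le (BddBelow.mono inter_subset_left bddBelow_Icc) hm) (not_le.2 hy.2)
    have hsub : ∀ x ∈ U, Ioo (AA x) (BB x) ⊆ U := by
      intro x hx y hy
      exact ⟨⟨lt_of_le_of_lt (hAmem x hx).1.1 hy.1, lt_of_lt_of_le hy.2 (hBmem x hx).1.2⟩,
        hmid x hx y hy⟩
    have hfA : ∀ x ∈ U, f (AA x) = 0 := by
      intro x hx
      refine le_antisymm (hAmem x hx).2 ?_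
      have htd : Filter.Tendsto f (nhdsWithin (AA x) (Ioi (AA x))) (nhds (f (AA x))) :=
        (hcont.tendsto (AA x)).mono_left nhdsWithin_le_nhds
      refine ge_of_tendsto htd ?_
      filter_upwards [Ioo_mem_nhdsGT_of_mem ⟨le_refl (AA x), (hself x hx).1⟩] with y hy
      exact (hmid x hx y ⟨hy.1, hy.2.trans (hself x hx).2⟩).le
    have hfB : ∀ x ∈ U, f (BB x) = 0 := by
      intro x hx
      refine le_antisymm (hBmem x hx).2 ?_
      have htd : Filter.Tendsto f (nhdsWithin (BB x) (Iio (BB x))) (nhds (f (BB x))) :=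
        (hcont.tendsto (BB x)).mono_left nhdsWithin_le_nhds
      refine ge_of_tendsto htd ?_
      filter_upwards [Ioo_mem_nhdsLT_of_mem ⟨(hself x hx).2, le_refl (BB x)⟩] with y hy
      exact (hmid x hx y ⟨(hself x hx).1.trans hy.1, hy.2⟩).le
    have hABle : ∀ x ∈ U, AA x ≤ BB x := fun x hx =>
      ((hself x hx).1.trans (hself x hx).2).le
    have hint0 : ∀ x ∈ U, ∫ u in Ioo (AA x) (BB x), g u = 0 := by
      intro x hx
      rw [← integral_Ioc_eq_integral_Ioo, hIoc _ _ (hABle x hx), hfA x hx, hfB x hx]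
      norm_num
    have hcompeq : ∀ x ∈ U, ∀ y ∈ Ioo (AA x) (BB x), AA y = AA x ∧ BB y = BB x := by
      intro x hx y hy
      constructor
      · apply le_antisymm
        · refine csSup_le ⟨0, ?_⟩ ?_
          · exact ⟨⟨le_refl 0, (hAmem x hx).1.1.trans hy.1.le⟩, hf0.le⟩
          rintro w ⟨⟨hw0, hwy⟩, hfw⟩
          by_contra hcon
          push_neg at hcon
          exact absurd (hmid x hx w ⟨hcon, lt_of_le_of_lt hwy hy.2⟩) (not_lt.2 hfw)
        · apply le_csSup (BddAbove.mono inter_subset_left bddAbove_Icc)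
          exact ⟨⟨(hAmem x hx).1.1, hy.1.le⟩, (hAmem x hx).2⟩
      · apply le_antisymm
        · apply csInf_le (BddBelow.mono inter_subset_left bddBelow_Icc)
          exact ⟨⟨hy.2.le, (hBmem x hx).1.2⟩, (hBmem x hx).2⟩
        · refine le_csInf ⟨c, ?_⟩ ?_
          · exact ⟨⟨hy.2.le.trans (hBmem x hx).1.2, le_refl c⟩, hfc⟩
          rintro w ⟨⟨hyw, hwc⟩, hfw⟩
          by_contra hcon
          push_neg at hcon
          exact absurd (hmid x hx w ⟨hy.1.trans_le hyw, hcon⟩) (not_lt.2 hfw)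
    obtain ⟨e0, he0⟩ := exists_surjective_nat ℚ
    obtain ⟨e, he⟩ : ∃ e : ℕ → ℝ, ∀ q : ℚ, ∃ k, e k = (q : ℝ) :=
      ⟨fun k => ((e0 k : ℚ) : ℝ), fun q => by
        obtain ⟨k, hk⟩ := he0 q
        refine ⟨k, ?_⟩
        show ((e0 k : ℚ) : ℝ) = (q : ℝ)
        rw [hk]⟩
    set D : ℕ → Set ℝ := fun k =>
      if (e k ∈ U ∧ ∀ l, l < k →
          ¬(e l ∈ U ∧ Ioo (AA (e l)) (BB (e l)) = Ioo (AA (e k)) (BB (e k))))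
      then Ioo (AA (e k)) (BB (e k)) else ∅ with hD
    have hDcases : ∀ k, D k = ∅ ∨
        ((e k ∈ U ∧ ∀ l, l < k →
          ¬(e l ∈ U ∧ Ioo (AA (e l)) (BB (e l)) = Ioo (AA (e k)) (BB (e k))))
          ∧ D k = Ioo (AA (e k)) (BB (e k))) := by
      intro k
      by_cases h : e k ∈ U ∧ ∀ l, l < k →
          ¬(e l ∈ U ∧ Ioo (AA (e l)) (BB (e l)) = Ioo (AA (e k)) (BB (e k)))
      · right
        refine ⟨h, ?_⟩
        rw [hD]
        simp only []
        rw [if_pos h]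
      · left
        rw [hD]
        simp only []
        rw [if_neg h]
    have hDU : ∀ k, D k ⊆ U := by
      intro k
      rcases hDcases k with h | ⟨h1, h2⟩
      · rw [h]; exact empty_subset U
      · rw [h2]; exact hsub _ h1.1
    have hDmeas : ∀ k, MeasurableSet (D k) := by
      intro k
      rcases hDcases k with h | ⟨_, h2⟩
      · rw [h]; exact MeasurableSet.empty
      · rw [h2]; exact measurableSet_Ioo
    have hDint : ∀ k, ∫ u in D k, g u = 0 := by
      intro k
      rcases hDcases k with h | ⟨h1, h2⟩
      · rw [h]; simp
      · rw [h2]; exact hint0 _ h1.1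
    have hUnion : U = ⋃ k, D k := by
      apply Subset.antisymm
      · intro x hx
        obtain ⟨q, hq1, hq2⟩ := exists_rat_btwn ((hself x hx).1.trans (hself x hx).2)
        obtain ⟨k0, hk0⟩ := he q
        have hex : ∃ k, e k ∈ Ioo (AA x) (BB x) := ⟨k0, by rw [hk0]; exact ⟨hq1, hq2⟩⟩
        have hKmem : e (Nat.find hex) ∈ Ioo (AA x) (BB x) := Nat.find_spec hex
        have hKU : e (Nat.find hex) ∈ U := hsub x hx hKmem
        have hABK := hcompeq x hx (e (Nat.find hex)) hKmem
        have hcond : ∀ l, l < Nat.find hex →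
            ¬(e l ∈ U ∧ Ioo (AA (e l)) (BB (e l)) =
              Ioo (AA (e (Nat.find hex))) (BB (e (Nat.find hex)))) := by
          rintro l hl ⟨hlU, hleq⟩
          have hmem : e l ∈ Ioo (AA (e l)) (BB (e l)) := hself (e l) hlU
          rw [hleq, hABK.1, hABK.2] at hmem
          exact Nat.find_min hex hl hmem
        refine mem_iUnion.2 ⟨Nat.find hex, ?_⟩
        rw [hD]
        simp only []
        rw [if_pos ⟨hKU, hcond⟩, hABK.1, hABK.2]
        exact hself x hx
      · exact iUnion_subset hDU
    have hdisj : Pairwise (Function.onFun Disjoint D) := by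
      apply (pairwise_disjoint_on D).2
      intro k l hkl
      rcases hDcases k with h | ⟨hk1, hk2⟩
      · rw [h]; exact Set.empty_disjoint _
      rcases hDcases l with h' | ⟨hl1, hl2⟩
      · rw [h']; exact Set.disjoint_empty _
      rw [Set.disjoint_left]
      intro z hzk hzl
      rw [hk2] at hzk
      rw [hl2] at hzl
      have e1 := hcompeq (e k) hk1.1 z hzk
      have e2 := hcompeq (e l) hl1.1 z hzl
      have heq : Ioo (AA (e k)) (BB (e k)) = Ioo (AA (e l)) (BB (e l)) := by
        rw [← e1.1, ← e1.2, ← e2.1, ← e2.2]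
      exact hl1.2 k hkl ⟨hk1.1, heq⟩
    have hIntU : IntegrableOn g (⋃ k, D k) := by
      refine (hIntOn 0 c).mono_set ?_
      rw [← hUnion]
      exact inter_subset_left.trans Ioo_subset_Ioc_self
    calc ∫ u in U, g u = ∑' k, ∫ u in D k, g u := by
          rw [hUnion]
          exact integral_iUnion hDmeas hdisj hIntU
      _ = 0 := by
          rw [tsum_congr hDint]
          exact tsum_zero
  have hfc' : f c ≤ 0 := hfc
  rw [hsplit, hP1, hP2]
  rcases eq_or_lt_of_le hcs with h | h
  · have : f s ≤ 0 := h ▸ hfc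
    rw [zero_add, ← h]
    simp only [max_le_iff]
    constructor <;> linarith
  · have h1 : 0 < f s := hgt s h (le_refl s)
    simp only [zero_add]
    rw [max_eq_left h1.le]
    linarith

/-- pause lemma: if the agents of `S` are paused during `[t, t + δ]` while all
other agents eat as normal, then at every time `s ≥ t` the remaining supply of every item in
the pause scenario is at least its remaining supply in the normal scenario. -/
theorem pause_lemma
    (n m : ℕ) (rk : Fin n → Fin m → ℕ) (hrk : ∀ i, Function.Injective (rk i))
    (t δ : ℝ) (ht : 0 ≤ t) (hδ : 0 ≤ δ) (S : Set (Fin n))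
    (E : PSExec n m rk (fun _ _ => True))
    (Ep : PSExec n m rk (fun i s => ¬(i ∈ S ∧ t ≤ s ∧ s ≤ t + δ))) :
    ∀ j : Fin m, ∀ s : ℝ, t ≤ s → E.rem j s ≤ Ep.rem j s := by
  classical
  intro j0 s hts
  have hs0 : (0:ℝ) ≤ s := ht.trans hts
  set Ap : Fin n → Fin m → Set ℝ := fun i j => {u | Ep.eats i u = some j} with hApdef
  set A : Fin n → Fin m → Set ℝ := fun i j => {u | E.eats i u = some j} with hAdef
  set g : Fin m → ℝ → ℝ := fun j u =>
    ∑ i, ((Ap i j).indicator (fun _ => (1:ℝ)) u - (A i j).indicator (fun _ => (1:ℝ)) u)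
    with hgdef
  set f : Fin m → ℝ → ℝ := fun j x => ∫ u in (0:ℝ)..x, g j u with hfdef
  have hApmeas : ∀ i j, MeasurableSet (Ap i j) := fun i j => Ep.meas i j
  have hAmeas : ∀ i j, MeasurableSet (A i j) := fun i j => E.meas i j
  have hindbd : ∀ (T : Set ℝ) (u : ℝ), |T.indicator (fun _ => (1:ℝ)) u| ≤ 1 := by
    intro T u
    rw [Set.indicator_apply]
    split_ifs <;> norm_num
  have hindnn : ∀ (T : Set ℝ) (u : ℝ), 0 ≤ T.indicator (fun _ => (1:ℝ)) u :=
    fun T u => Set.indicator_nonneg (fun _ _ => zero_le_one) u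
  have hindle : ∀ (T : Set ℝ) (u : ℝ), T.indicator (fun _ => (1:ℝ)) u ≤ 1 := by
    intro T u
    rw [Set.indicator_apply]
    split_ifs <;> norm_num
  have hgmeas : ∀ j, Measurable (g j) := by
    intro j
    apply Finset.measurable_sum
    intro i _
    exact (measurable_const.indicator (hApmeas i j)).sub
      (measurable_const.indicator (hAmeas i j))
  have hgbd : ∀ j u, |g j u| ≤ (n : ℝ) := by
    intro j u
    calc |g j u| ≤ ∑ i, |(Ap i j).indicator (fun _ => (1:ℝ)) u
          - (A i j).indicator (fun _ => (1:ℝ)) u| := Finset.abs_sum_le_sum_abs _ _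
      _ ≤ ∑ _i : Fin n, (1:ℝ) := by
          refine Finset.sum_le_sum fun i _ => ?_
          have h1 := hindnn (Ap i j) u
          have h2 := hindnn (A i j) u
          have h3 := hindle (Ap i j) u
          have h4 := hindle (A i j) u
          rw [abs_le]
          constructor <;> linarith
      _ = (n : ℝ) := by simp
  -- integral of an indicator over Ioc equals the measure of the intersection
  have hind : ∀ (T : Set ℝ), MeasurableSet T → ∀ x : ℝ,
      ∫ u in Ioc (0:ℝ) x, T.indicator (fun _ => (1:ℝ)) u
        = (volume (T ∩ Ioc 0 x)).toReal := by
    intro T hT x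
    rw [setIntegral_indicator hT, setIntegral_const, smul_eq_mul, mul_one, inter_comm, measureReal_def]
  have hii : ∀ (T : Set ℝ), MeasurableSet T → ∀ x : ℝ,
      IntegrableOn (T.indicator (fun _ => (1:ℝ))) (Ioc (0:ℝ) x) := by
    intro T hT x
    exact bdd_integrableOn _ (measurable_const.indicator hT) 1 (hindbd T) _ measure_Ioc_lt_top
  -- representation of the difference of remaining supplies
  have hf_eq : ∀ j, ∀ x : ℝ, 0 ≤ x → f j x = E.rem j x - Ep.rem j x := by
    intro j x hx
    have h1 : f j x = ∫ u in Ioc (0:ℝ) x, g j u := intervalIntegral.integral_of_le hx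
    have hsetE : ∀ i : Fin n, {u : ℝ | 0 < u ∧ u ≤ x ∧ E.eats i u = some j}
        = A i j ∩ Ioc 0 x := by
      intro i
      ext u
      simp only [mem_setOf_eq, mem_inter_iff, mem_Ioc, hAdef]
      tauto
    have hsetEp : ∀ i : Fin n, {u : ℝ | 0 < u ∧ u ≤ x ∧ Ep.eats i u = some j}
        = Ap i j ∩ Ioc 0 x := by
      intro i
      ext u
      simp only [mem_setOf_eq, mem_inter_iff, mem_Ioc, hApdef]
      tauto
    have h2 : ∫ u in Ioc (0:ℝ) x, g j u
        = ∑ i, ((volume (Ap i j ∩ Ioc 0 x)).toReal - (volume (A i j ∩ Ioc 0 x)).toReal) := by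
      simp only [hgdef]
      refine (integral_finset_sum (μ := volume.restrict (Ioc (0:ℝ) x)) Finset.univ
        (f := fun (i : Fin n) (u : ℝ) => (Ap i j).indicator (fun _ => (1:ℝ)) u
          - (A i j).indicator (fun _ => (1:ℝ)) u)
        (fun i _ => (hii _ (hApmeas i j) x).sub (hii _ (hAmeas i j) x))).trans ?_
      refine Finset.sum_congr rfl fun i _ => ?_
      rw [integral_sub (hii _ (hApmeas i j) x) (hii _ (hAmeas i j) x),
        hind _ (hApmeas i j) x, hind _ (hAmeas i j) x]
    rw [h1, h2, E.rem_def j x hx, Ep.rem_def j x hx]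
    rw [Finset.sum_sub_distrib]
    have e1 : ∀ i : Fin n, volume {u : ℝ | 0 < u ∧ u ≤ x ∧ E.eats i u = some j}
        = volume (A i j ∩ Ioc 0 x) := fun i => by rw [hsetE i]
    have e2 : ∀ i : Fin n, volume {u : ℝ | 0 < u ∧ u ≤ x ∧ Ep.eats i u = some j}
        = volume (Ap i j ∩ Ioc 0 x) := fun i => by rw [hsetEp i]
    simp only [e1, e2]
    ring
  -- the pointwise (per-agent) inequality
  have hagent : ∀ u : ℝ, 0 < u → ∀ i : Fin n,
      (∑ j, if 0 < f j u then
        ((Ap i j).indicator (fun _ => (1:ℝ)) u - (A i j).indicator (fun _ => (1:ℝ)) u)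
        else 0) ≤ 0 := by
    intro u hu i
    have hu0 : (0:ℝ) ≤ u := hu.le
    have hcnd : ∀ j, (0 < f j u) ↔ Ep.rem j u < E.rem j u := by
      intro j
      rw [hf_eq j u hu0]
      exact sub_pos
    rcases hEp : Ep.eats i u with _ | jp
    · -- Ep eats nothing
      apply Finset.sum_nonpos
      intro j _
      have hap : (Ap i j).indicator (fun _ => (1:ℝ)) u = 0 := by
        apply Set.indicator_of_notMem
        simp only [hApdef, mem_setOf_eq, hEp]
        exact fun hcon => absurd hcon (by simp)
      by_cases hcif : 0 < f j u
      · rw [if_pos hcif, hap]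
        have := hindnn (A i j) u
        linarith
      · rw [if_neg hcif]
    · -- Ep eats jp
      by_cases hpos : 0 < f jp u
      swap
      · apply Finset.sum_nonpos
        intro j _
        by_cases hj : j = jp
        · subst hj
          rw [if_neg hpos]
        · have hap : (Ap i j).indicator (fun _ => (1:ℝ)) u = 0 := by
            apply Set.indicator_of_notMem
            simp only [hApdef, mem_setOf_eq, hEp]
            intro hcon
            exact hj (Option.some_injective _ hcon).symm
          by_cases hcif : 0 < f j u
          · rw [if_pos hcif, hap]
            have := hindnn (A i j) u
            linarith
          · rw [if_neg hcif]
      · -- main case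
        have hact : ¬(i ∈ S ∧ t ≤ u ∧ u ≤ t + δ) := by
          intro hcontra
          have hnone := Ep.eats_none i u (not_not_intro hcontra)
          rw [hnone] at hEp
          exact absurd hEp (by simp)
        obtain ⟨hpRem, hpBest⟩ := (Ep.eats_iff i u hu0 hact jp).1 hEp
        have hERem : 0 < E.rem jp u := by
          have := (hcnd jp).1 hpos
          linarith
        obtain ⟨j2, hj2mem, hj2min⟩ := Finset.exists_min_image
          (Finset.univ.filter fun j' => 0 < E.rem j' u) (rk i)
          ⟨jp, by simp [hERem]⟩
        simp only [Finset.mem_filter, Finset.mem_univ, true_and] at hj2mem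
        have hj2eats : E.eats i u = some j2 := by
          apply (E.eats_iff i u hu0 trivial j2).2
          refine ⟨hj2mem, fun j' hj' => hj2min j' ?_⟩
          simp [hj']
        by_cases hjj : j2 = jp
        · -- E eats jp as well; every term is ≤ 0
          subst hjj
          apply Finset.sum_nonpos
          intro j _
          by_cases hj : j = j2
          · subst hj
            by_cases hcif : 0 < f j u
            · have h1 : (Ap i j).indicator (fun _ => (1:ℝ)) u = 1 := by
                apply Set.indicator_of_mem
                simp only [hApdef, mem_setOf_eq, hEp]
              have h2 : (A i j).indicator (fun _ => (1:ℝ)) u = 1 := by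
                apply Set.indicator_of_mem
                simp only [hAdef, mem_setOf_eq, hj2eats]
              rw [if_pos hcif, h1, h2]
              norm_num
            · rw [if_neg hcif]
          · have hap : (Ap i j).indicator (fun _ => (1:ℝ)) u = 0 := by
              apply Set.indicator_of_notMem
              simp only [hApdef, mem_setOf_eq, hEp]
              intro hcon
              exact hj (Option.some_injective _ hcon).symm
            by_cases hcif : 0 < f j u
            · rw [if_pos hcif, hap]
              have := hindnn (A i j) u
              linarith
            · rw [if_neg hcif]
        · -- the interesting case: E eats a strictly better item j2 with f j2 u > 0
          have hrkle : rk i j2 ≤ rk i jp := by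
            apply hj2min
            simp [hERem]
          have hrklt : rk i j2 < rk i jp :=
            lt_of_le_of_ne hrkle fun hh => hjj (hrk i hh)
          have hEpj2 : ¬ 0 < Ep.rem j2 u := fun hcon =>
            absurd (hpBest j2 hcon) (not_le.2 hrklt)
          have hfj2 : 0 < f j2 u :=
            (hcnd j2).2 (lt_of_le_of_lt (not_lt.1 hEpj2) hj2mem)
          calc (∑ j, if 0 < f j u then
                ((Ap i j).indicator (fun _ => (1:ℝ)) u - (A i j).indicator (fun _ => (1:ℝ)) u)
                else 0)
              ≤ ∑ j, ((if j = jp then (1:ℝ) else 0) + (if j = j2 then (-1:ℝ) else 0)) := by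
                refine Finset.sum_le_sum fun j _ => ?_
                by_cases h1 : j = jp
                · have hrhs : ((if j = jp then (1:ℝ) else 0) + (if j = j2 then (-1:ℝ) else 0))
                      = 1 := by
                    rw [if_pos h1, if_neg (show ¬ j = j2 from fun hh => hjj (hh.symm.trans h1))]
                    norm_num
                  rw [hrhs]
                  by_cases hcif : 0 < f j u
                  · rw [if_pos hcif]
                    have := hindle (Ap i j) u
                    have := hindnn (A i j) u
                    linarith
                  · rw [if_neg hcif]
                    norm_num
                · by_cases h2 : j = j2
                  · have hrhs : ((if j = jp then (1:ℝ) else 0) + (if j = j2 then (-1:ℝ) else 0))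
                        = -1 := by
                      rw [if_neg h1, if_pos h2]
                      norm_num
                    have hfj : 0 < f j u := h2 ▸ hfj2
                    have hap : (Ap i j).indicator (fun _ => (1:ℝ)) u = 0 := by
                      apply Set.indicator_of_notMem
                      simp only [hApdef, mem_setOf_eq, hEp]
                      intro hcon
                      exact h1 (Option.some_injective _ hcon).symm
                    have ha : (A i j).indicator (fun _ => (1:ℝ)) u = 1 := by
                      apply Set.indicator_of_mem
                      simp only [hAdef, mem_setOf_eq, hj2eats, h2]
                    rw [hrhs, if_pos hfj, hap, ha]
                    norm_num
                  · have hrhs : ((if j = jp then (1:ℝ) else 0) + (if j = j2 then (-1:ℝ) else 0))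
                        = 0 := by
                      rw [if_neg h1, if_neg h2]
                      norm_num
                    have hap : (Ap i j).indicator (fun _ => (1:ℝ)) u = 0 := by
                      apply Set.indicator_of_notMem
                      simp only [hApdef, mem_setOf_eq, hEp]
                      intro hcon
                      exact h1 (Option.some_injective _ hcon).symm
                    rw [hrhs]
                    by_cases hcif : 0 < f j u
                    · rw [if_pos hcif, hap]
                      have := hindnn (A i j) u
                      linarith
                    · rw [if_neg hcif]
            _ = 0 := by
                rw [Finset.sum_add_distrib]
                rw [Finset.sum_ite_eq' Finset.univ jp (fun _ => (1:ℝ))]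
                rw [Finset.sum_ite_eq' Finset.univ j2 (fun _ => (-1:ℝ))]
                simp
  -- apply the analysis lemma and sum over items
  have hfprim : ∀ j : Fin m, f j = fun x => ∫ u in (0:ℝ)..x, g j u := fun j => rfl
  have hfcont : ∀ j, Continuous (f j) := by
    intro j
    rw [hfprim j]
    refine intervalIntegral.continuous_primitive (fun a b => ?_) 0
    constructor <;> exact bdd_integrableOn _ (hgmeas j) _ (hgbd j) _ measure_Ioc_lt_top
  have hmeasP : ∀ j, MeasurableSet {v : ℝ | 0 < f j v} :=
    fun j => (isOpen_lt continuous_const (hfcont j)).measurableSet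
  have hIntInd : ∀ j, IntegrableOn ({v : ℝ | 0 < f j v}.indicator (g j)) (Ioc (0:ℝ) s) :=
    fun j => (bdd_integrableOn _ (hgmeas j) _ (hgbd j) _ measure_Ioc_lt_top).indicator (hmeasP j)
  have hsum : (∑ j, max (f j s) 0) ≤ 0 := by
    calc (∑ j, max (f j s) 0)
        ≤ ∑ j, ∫ u in Ioc (0:ℝ) s, ({v : ℝ | 0 < f j v}.indicator (g j)) u :=
          Finset.sum_le_sum fun j _ =>
            key_analysis (g j) (hgmeas j) n (hgbd j) (f j) (hfprim j) s hs0
      _ = ∫ u in Ioc (0:ℝ) s, ∑ j, ({v : ℝ | 0 < f j v}.indicator (g j)) u :=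
          (integral_finset_sum _ fun j _ => hIntInd j).symm
      _ ≤ 0 := by
          refine setIntegral_nonpos_ae measurableSet_Ioc (ae_of_all _ fun u hu => ?_)
          have hswap : (∑ j, ({v : ℝ | 0 < f j v}.indicator (g j)) u)
              = ∑ i, ∑ j, (if 0 < f j u then
                  ((Ap i j).indicator (fun _ => (1:ℝ)) u - (A i j).indicator (fun _ => (1:ℝ)) u)
                  else 0) := by
            rw [Finset.sum_comm]
            refine Finset.sum_congr rfl fun j _ => ?_
            by_cases hcnd : 0 < f j u
            · rw [Set.indicator_of_mem (show u ∈ {v : ℝ | 0 < f j v} from hcnd)]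
              simp only [hgdef]
              refine Finset.sum_congr rfl fun i _ => ?_
              rw [if_pos hcnd]
            · rw [Set.indicator_of_notMem (show u ∉ {v : ℝ | 0 < f j v} from hcnd)]
              symm
              apply Finset.sum_eq_zero
              intro i _
              rw [if_neg hcnd]
          rw [hswap]
          exact Finset.sum_nonpos fun i _ => hagent u hu.1 i
  have h1 : max (f j0 s) 0 ≤ 0 :=
    le_trans (Finset.single_le_sum (f := fun j => max (f j s) 0)
      (fun j _ => le_max_right _ _) (Finset.mem_univ j0)) hsum
  have h2 : f j0 s ≤ 0 := le_trans (le_max_left _ _) h1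
  have h3 := hf_eq j0 s hs0
  linarith [h3 ▸ h2]
end

section
/- In the Probabilistic Serial mechanism with n ≥ m, suppose agent 1's utilities are dichotomous with interest set O̅, and let T be the exhaustion time of O̅ in the truthful profile (so u_1 = T). If 0 < T < 1/2, then for every misreport of agent 1 (with the other agents' reports fixed), u'_1 ≤ (3/2)·T = (3/2)·u_1. -/
open MeasureTheory

namespace PSExec

section Aux

variable {n m : ℕ} {rk : Fin n → Fin m → ℕ}

variable (E : PSExec n m rk (fun _ _ => True))

lemma eats_iff'' (i : Fin n) {t : ℝ} (ht : 0 ≤ t) (j : Fin m) :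
    E.eats i t = some j ↔ (0 < E.rem j t ∧ ∀ j', 0 < E.rem j' t → rk i j ≤ rk i j') :=
  E.eats_iff i t ht trivial j

lemma eats_pos {i : Fin n} {t : ℝ} (ht : 0 ≤ t) {j : Fin m} (h : E.eats i t = some j) :
    0 < E.rem j t := ((E.eats_iff'' i ht j).mp h).1

lemma eats_min {i : Fin n} {t : ℝ} (ht : 0 ≤ t) {j : Fin m} (h : E.eats i t = some j)
    {j' : Fin m} (h' : 0 < E.rem j' t) : rk i j ≤ rk i j' :=
  ((E.eats_iff'' i ht j).mp h).2 j' h'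

lemma measES (i : Fin n) (j : Fin m) (a b : ℝ) :
    MeasurableSet {s : ℝ | a < s ∧ s ≤ b ∧ E.eats i s = some j} := by
  have h : {s : ℝ | a < s ∧ s ≤ b ∧ E.eats i s = some j}
      = Set.Ioc a b ∩ {t : ℝ | E.eats i t = some j} := by
    ext s; simp only [Set.mem_setOf_eq, Set.mem_inter_iff, Set.mem_Ioc]; tauto
  rw [h]; exact measurableSet_Ioc.inter (E.meas i j)

lemma volES_le (i : Fin n) (j : Fin m) {a b : ℝ} :
    volume {s : ℝ | a < s ∧ s ≤ b ∧ E.eats i s = some j} ≤ ENNReal.ofReal (b - a) := by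
  calc volume {s : ℝ | a < s ∧ s ≤ b ∧ E.eats i s = some j} ≤ volume (Set.Ioc a b) :=
        measure_mono (fun s hs => ⟨hs.1, hs.2.1⟩)
    _ = ENNReal.ofReal (b - a) := by rw [Real.volume_Ioc]

lemma volES_ne_top (i : Fin n) (j : Fin m) {a b : ℝ} :
    volume {s : ℝ | a < s ∧ s ≤ b ∧ E.eats i s = some j} ≠ ⊤ :=
  fun h => by simpa [h] using (E.volES_le i j (a := a) (b := b))

lemma rem_sub (j : Fin m) {a b : ℝ} (ha : 0 ≤ a) (hab : a ≤ b) :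
    E.rem j a - E.rem j b
      = ∑ i : Fin n, (volume {s : ℝ | a < s ∧ s ≤ b ∧ E.eats i s = some j}).toReal := by
  rw [E.rem_def j a ha, E.rem_def j b (ha.trans hab)]
  have key : ∀ i : Fin n,
      (volume {s : ℝ | 0 < s ∧ s ≤ b ∧ E.eats i s = some j}).toReal
        = (volume {s : ℝ | 0 < s ∧ s ≤ a ∧ E.eats i s = some j}).toReal
          + (volume {s : ℝ | a < s ∧ s ≤ b ∧ E.eats i s = some j}).toReal := by
    intro i
    have hdisj : Disjoint {s : ℝ | 0 < s ∧ s ≤ a ∧ E.eats i s = some j}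
        {s : ℝ | a < s ∧ s ≤ b ∧ E.eats i s = some j} := by
      rw [Set.disjoint_left]; rintro s ⟨_, h2, _⟩ ⟨h4, _, _⟩; exact absurd h2 (not_le.2 h4)
    have hun : {s : ℝ | 0 < s ∧ s ≤ b ∧ E.eats i s = some j}
        = {s : ℝ | 0 < s ∧ s ≤ a ∧ E.eats i s = some j}
          ∪ {s : ℝ | a < s ∧ s ≤ b ∧ E.eats i s = some j} := by
      ext s; constructor
      · rintro ⟨h1, h2, h3⟩
        rcases le_or_gt s a with h | h
        · exact Or.inl ⟨h1, h, h3⟩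
        · exact Or.inr ⟨h, h2, h3⟩
      · rintro (⟨h1, h2, h3⟩ | ⟨h1, h2, h3⟩)
        · exact ⟨h1, h2.trans hab, h3⟩
        · exact ⟨lt_of_le_of_lt ha h1, h2, h3⟩
    rw [hun, measure_union hdisj (E.measES i j a b),
      ENNReal.toReal_add (E.volES_ne_top i j) (E.volES_ne_top i j)]
  have hsum : ∑ i : Fin n, (volume {s : ℝ | 0 < s ∧ s ≤ b ∧ E.eats i s = some j}).toReal
      = ∑ i : Fin n, (volume {s : ℝ | 0 < s ∧ s ≤ a ∧ E.eats i s = some j}).toReal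
        + ∑ i : Fin n, (volume {s : ℝ | a < s ∧ s ≤ b ∧ E.eats i s = some j}).toReal := by
    rw [← Finset.sum_add_distrib]; exact Finset.sum_congr rfl (fun i _ => key i)
  linarith [hsum]

lemma rem_le (j : Fin m) {a b : ℝ} (ha : 0 ≤ a) (hab : a ≤ b) :
    E.rem j b ≤ E.rem j a := by
  have h := E.rem_sub j ha hab
  have : 0 ≤ ∑ i : Fin n, (volume {s : ℝ | a < s ∧ s ≤ b ∧ E.eats i s = some j}).toReal :=
    Finset.sum_nonneg fun i _ => ENNReal.toReal_nonneg
  linarith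

lemma rem_sub_le (j : Fin m) {a b : ℝ} (ha : 0 ≤ a) (hab : a ≤ b) :
    E.rem j a - E.rem j b ≤ n * (b - a) := by
  rw [E.rem_sub j ha hab]
  have hb : ∀ i : Fin n,
      (volume {s : ℝ | a < s ∧ s ≤ b ∧ E.eats i s = some j}).toReal ≤ b - a := by
    intro i
    exact ENNReal.toReal_le_of_le_ofReal (by linarith) (E.volES_le i j)
  calc ∑ i : Fin n, (volume {s : ℝ | a < s ∧ s ≤ b ∧ E.eats i s = some j}).toReal
      ≤ ∑ _i : Fin n, (b - a) := Finset.sum_le_sum fun i _ => hb i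
    _ = n * (b - a) := by simp [Finset.sum_const, Finset.card_univ, mul_comm]; ring

lemma rem_zero (j : Fin m) : E.rem j 0 = 1 := by
  rw [E.rem_def j 0 le_rfl]
  have : ∀ i : Fin n, {s : ℝ | 0 < s ∧ s ≤ 0 ∧ E.eats i s = some j} = ∅ := by
    intro i; ext s; simp only [Set.mem_setOf_eq, Set.mem_empty_iff_false, iff_false]
    rintro ⟨h1, h2, _⟩; linarith
  simp [this]

end Aux

end PSExec
namespace PSExec

section Aux2

variable {n m : ℕ} {rk : Fin n → Fin m → ℕ}

variable (E : PSExec n m rk (fun _ _ => True))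

lemma exists_eats (i : Fin n) {t : ℝ} (ht : 0 ≤ t) {j₀ : Fin m} (h : 0 < E.rem j₀ t) :
    ∃ j, E.eats i t = some j ∧ 0 < E.rem j t ∧ ∀ j', 0 < E.rem j' t → rk i j ≤ rk i j' := by
  obtain ⟨j, hj, hmin⟩ := Finset.exists_min_image
    (Finset.univ.filter fun j => 0 < E.rem j t) (rk i)
    ⟨j₀, by simp [h]⟩
  simp only [Finset.mem_filter, Finset.mem_univ, true_and] at hj
  have hmin' : ∀ j', 0 < E.rem j' t → rk i j ≤ rk i j' := by
    intro j' hj'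
    exact hmin j' (by simp [hj'])
  exact ⟨j, (E.eats_iff'' i ht j).mpr ⟨hj, hmin'⟩, hj, hmin'⟩

lemma rem_nonneg (j : Fin m) {t : ℝ} (ht : 0 ≤ t) : 0 ≤ E.rem j t := by
  by_contra hneg
  push_neg at hneg
  set Z : Set ℝ := {u | 0 ≤ u ∧ E.rem j u ≤ 0} with hZ
  have htZ : t ∈ Z := ⟨ht, hneg.le⟩
  have hbdd : BddBelow Z := ⟨0, fun u hu => hu.1⟩
  have hne : Z.Nonempty := ⟨t, htZ⟩
  set τ := sInf Z with hτ
  have hτ0 : 0 ≤ τ := le_csInf hne (fun u hu => hu.1)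
  have hτt : τ ≤ t := csInf_le hbdd htZ
  have hZc : ∀ u ∈ Z, (1 : ℝ) ≤ n * u := by
    intro u hu
    have h1 : E.rem j 0 - E.rem j u ≤ n * (u - 0) := E.rem_sub_le j le_rfl hu.1
    rw [E.rem_zero j] at h1
    have h2 := hu.2
    linarith
  have hn : (0:ℝ) < n := by
    by_contra hc; push_neg at hc
    have h1 := hZc t htZ
    nlinarith
  have hle : E.rem j τ ≤ 0 := by
    have key : ∀ ε : ℝ, 0 < ε → E.rem j τ ≤ n * ε := by
      intro ε hε
      obtain ⟨u, huZ, hu⟩ := (csInf_lt_iff hbdd hne).mp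
        (show sInf Z < τ + ε by rw [← hτ]; linarith)
      have hτu : τ ≤ u := csInf_le hbdd huZ
      have h2 : E.rem j τ - E.rem j u ≤ n * (u - τ) := E.rem_sub_le j hτ0 hτu
      have h3 : (n:ℝ) * (u - τ) ≤ n * ε := by
        apply mul_le_mul_of_nonneg_left (by linarith) hn.le
      linarith [huZ.2]
    by_contra hc; push_neg at hc
    have h1 := key (E.rem j τ / (2 * n)) (by positivity)
    have heq : (n:ℝ) * (E.rem j τ / (2 * n)) = E.rem j τ / 2 := by
      field_simp
    rw [heq] at h1
    linarith
  have hge : 0 ≤ E.rem j τ := by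
    have key : ∀ ε : ℝ, 0 < ε → -(n * ε) ≤ E.rem j τ := by
      intro ε hε
      set u := max 0 (τ - ε) with hu
      have hu0 : 0 ≤ u := le_max_left _ _
      have huτ : u ≤ τ := by
        apply max_le hτ0; linarith
      have hτu : τ - u ≤ ε := by
        rcases le_total 0 (τ - ε) with h | h
        · rw [hu, max_eq_right h]; linarith
        · rw [hu, max_eq_left (by linarith)]; linarith
      have hupos : 0 < E.rem j u := by
        by_contra hc; push_neg at hc
        have huZ : u ∈ Z := ⟨hu0, hc⟩
        have := csInf_le hbdd huZ
        rw [← hτ] at this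
        -- τ ≤ u and u ≤ τ, so u = τ; but then rem j τ ≤ 0 is fine... need strictness
        -- instead: u ∈ Z means 1 ≤ n*u, fine; contradiction needed differently
        -- Use: τ ≤ u always; combined with u = max 0 (τ-ε):
        -- if τ - ε ≥ 0 then u = τ - ε < τ contradiction with τ ≤ u
        -- else u = 0, and τ ≤ 0 so τ = 0, rem j 0 = 1 > 0 contradicts hc
        rcases le_total 0 (τ - ε) with h | h
        · rw [hu, max_eq_right h] at this; linarith
        · rw [hu, max_eq_left (by linarith)] at this
          have hτ0' : τ = 0 := le_antisymm this hτ0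
          rw [hu, max_eq_left (by linarith), ← hτ0'] at hc
          rw [hτ0'] at hc
          rw [E.rem_zero j] at hc; linarith
      have h2 : E.rem j u - E.rem j τ ≤ n * (τ - u) := E.rem_sub_le j hu0 huτ
      have h3 : (n:ℝ) * (τ - u) ≤ n * ε := mul_le_mul_of_nonneg_left hτu hn.le
      linarith
    by_contra hc; push_neg at hc
    have h1 := key (-(E.rem j τ) / (2 * n)) (div_pos (by linarith) (by positivity))
    have heq : (n:ℝ) * (-(E.rem j τ) / (2 * n)) = -(E.rem j τ) / 2 := by
      field_simp
    rw [heq] at h1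
    linarith
  have hτzero : E.rem j τ = 0 := le_antisymm hle hge
  -- no one eats j after τ
  have hempty : ∀ i : Fin n, {s : ℝ | τ < s ∧ s ≤ t ∧ E.eats i s = some j} = ∅ := by
    intro i; ext s
    simp only [Set.mem_setOf_eq, Set.mem_empty_iff_false, iff_false]
    rintro ⟨h1, h2, h3⟩
    have hs0 : (0:ℝ) ≤ s := hτ0.trans h1.le
    have := E.eats_pos hs0 h3
    have := E.rem_le j hτ0 h1.le
    linarith
  have hsum := E.rem_sub j hτ0 hτt
  simp only [hempty, measure_empty, ENNReal.toReal_zero, Finset.sum_const_zero] at hsum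
  linarith

lemma rem_stay (j : Fin m) {a b : ℝ} (ha : 0 ≤ a) (hab : a ≤ b) (h : E.rem j a = 0) :
    E.rem j b = 0 :=
  le_antisymm (h ▸ E.rem_le j ha hab) (E.rem_nonneg j (ha.trans hab))

lemma rem_two (hmn : m ≤ n) (j : Fin m) : E.rem j 2 = 0 := by
  by_contra h0
  have hpos : 0 < E.rem j 2 := lt_of_le_of_ne (E.rem_nonneg j (by norm_num)) (Ne.symm h0)
  have hm : 0 < m := j.pos
  have hcov : ∀ i : Fin n, Set.Ioc (0:ℝ) 2
      = ⋃ j' ∈ (Finset.univ : Finset (Fin m)), {s : ℝ | 0 < s ∧ s ≤ 2 ∧ E.eats i s = some j'} := by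
    intro i; ext s; constructor
    · rintro ⟨h1, h2⟩
      have hrem : 0 < E.rem j s := lt_of_lt_of_le hpos (E.rem_le j h1.le h2)
      obtain ⟨j', hj', -, -⟩ := E.exists_eats i h1.le hrem
      exact Set.mem_biUnion (Finset.mem_univ j') ⟨h1, h2, hj'⟩
    · simp only [Set.mem_iUnion]; rintro ⟨j', -, h1, h2, -⟩; exact ⟨h1, h2⟩
  have hdisj : ∀ i : Fin n, (↑(Finset.univ : Finset (Fin m)) : Set (Fin m)).PairwiseDisjoint
      (fun j' => {s : ℝ | 0 < s ∧ s ≤ 2 ∧ E.eats i s = some j'}) := by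
    intro i j1 _ j2 _ hne
    rw [Function.onFun, Set.disjoint_left]
    rintro s ⟨_, _, h1⟩ ⟨_, _, h2⟩
    rw [h1] at h2; exact hne (Option.some_inj.mp h2)
  have hvol : ∀ i : Fin n,
      ∑ j' : Fin m, (volume {s : ℝ | 0 < s ∧ s ≤ 2 ∧ E.eats i s = some j'}).toReal = 2 := by
    intro i
    calc ∑ j' : Fin m, (volume {s : ℝ | 0 < s ∧ s ≤ 2 ∧ E.eats i s = some j'}).toReal
        = (∑ j' : Fin m, volume {s : ℝ | 0 < s ∧ s ≤ 2 ∧ E.eats i s = some j'}).toReal :=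
          (ENNReal.toReal_sum (fun j' _ => E.volES_ne_top i j')).symm
      _ = (volume (⋃ j' ∈ (Finset.univ : Finset (Fin m)),
            {s : ℝ | 0 < s ∧ s ≤ 2 ∧ E.eats i s = some j'})).toReal := by
          rw [measure_biUnion_finset (hdisj i) (fun j' _ => E.measES i j' 0 2)]
      _ = (volume (Set.Ioc (0:ℝ) 2)).toReal := by rw [← hcov i]
      _ = 2 := by rw [Real.volume_Ioc]; norm_num
  have hsum1 : ∑ j' : Fin m, (1 - E.rem j' 2) = 2 * n := by
    have hj' : ∀ j' : Fin m, 1 - E.rem j' 2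
        = ∑ i : Fin n, (volume {s : ℝ | 0 < s ∧ s ≤ 2 ∧ E.eats i s = some j'}).toReal := by
      intro j'
      have := E.rem_def j' 2 (by norm_num)
      linarith
    rw [Finset.sum_congr rfl (fun j' _ => hj' j'), Finset.sum_comm,
      Finset.sum_congr rfl (fun i _ => hvol i)]
    simp [Finset.sum_const, Finset.card_univ, mul_comm]
  have hle : ∑ j' : Fin m, (1 - E.rem j' 2) ≤ (m:ℝ) := by
    calc ∑ j' : Fin m, (1 - E.rem j' 2) ≤ ∑ _j' : Fin m, (1:ℝ) :=
          Finset.sum_le_sum (fun j' _ => by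
            linarith [E.rem_nonneg j' (show (0:ℝ) ≤ 2 by norm_num)])
      _ = m := by simp
  have hmn' : (m:ℝ) ≤ n := Nat.cast_le.mpr hmn
  have hm1 : (1:ℝ) ≤ m := Nat.one_le_cast.mpr hm
  rw [hsum1] at hle
  linarith

end Aux2

/-- The exhaustion time of item `j`. -/
noncomputable def tauF (E : PSExec n m rk (fun _ _ => True)) (j : Fin m) : ℝ :=
  sInf {u : ℝ | 0 ≤ u ∧ E.rem j u = 0}

section Aux3

variable {n m : ℕ} {rk : Fin n → Fin m → ℕ}

variable (E : PSExec n m rk (fun _ _ => True))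

lemma tau_spec (hmn : m ≤ n) (j : Fin m) :
    E.rem j (E.tauF j) = 0 ∧ 0 ≤ E.tauF j ∧ E.tauF j ≤ 2 := by
  have hne : Set.Nonempty {u : ℝ | 0 ≤ u ∧ E.rem j u = 0} :=
    ⟨2, by norm_num, E.rem_two hmn j⟩
  have hbdd : BddBelow {u : ℝ | 0 ≤ u ∧ E.rem j u = 0} := ⟨0, fun u hu => hu.1⟩
  have htf : E.tauF j = sInf {u : ℝ | 0 ≤ u ∧ E.rem j u = 0} := rfl
  have h0 : 0 ≤ E.tauF j := by rw [htf]; exact le_csInf hne fun u hu => hu.1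
  have h2 : E.tauF j ≤ 2 := by
    rw [htf]; exact csInf_le hbdd ⟨by norm_num, E.rem_two hmn j⟩
  refine ⟨?_, h0, h2⟩
  have hge : 0 ≤ E.rem j (E.tauF j) := E.rem_nonneg j h0
  have hn : (0:ℝ) < n := by
    have hm : 0 < m := j.pos
    exact_mod_cast lt_of_lt_of_le hm hmn
  have key : ∀ ε : ℝ, 0 < ε → E.rem j (E.tauF j) ≤ n * ε := by
    intro ε hε
    obtain ⟨u, huZ, hu⟩ := (csInf_lt_iff hbdd hne).mp
      (show sInf {u : ℝ | 0 ≤ u ∧ E.rem j u = 0} < E.tauF j + ε by rw [← htf]; linarith)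
    have hτu : E.tauF j ≤ u := by rw [htf]; exact csInf_le hbdd huZ
    have h2' : E.rem j (E.tauF j) - E.rem j u ≤ n * (u - E.tauF j) := E.rem_sub_le j h0 hτu
    have h3 : (n:ℝ) * (u - E.tauF j) ≤ n * ε := mul_le_mul_of_nonneg_left (by linarith) hn.le
    have h4 : E.rem j u = 0 := huZ.2
    linarith
  by_contra hne0
  have hpos : 0 < E.rem j (E.tauF j) := lt_of_le_of_ne hge (Ne.symm hne0)
  have h1 := key (E.rem j (E.tauF j) / (2 * n)) (by positivity)
  have heq : (n:ℝ) * (E.rem j (E.tauF j) / (2 * n)) = E.rem j (E.tauF j) / 2 := by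
    field_simp
  rw [heq] at h1
  linarith

lemma tau_le_of_zero (j : Fin m) {t : ℝ} (ht : 0 ≤ t) (h : E.rem j t = 0) :
    E.tauF j ≤ t :=
  csInf_le ⟨0, fun u hu => hu.1⟩ ⟨ht, h⟩

lemma rem_pos_iff (hmn : m ≤ n) (j : Fin m) {t : ℝ} (ht : 0 ≤ t) :
    0 < E.rem j t ↔ t < E.tauF j := by
  obtain ⟨hz, h0, -⟩ := E.tau_spec hmn j
  constructor
  · intro h; by_contra hc; push_neg at hc
    have := E.rem_le j h0 hc
    linarith
  · intro h
    rcases lt_or_eq_of_le (E.rem_nonneg j ht) with h' | h'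
    · exact h'
    · exfalso
      have := E.tau_le_of_zero j ht h'.symm
      linarith

lemma tau_pos (hmn : m ≤ n) (j : Fin m) : 0 < E.tauF j :=
  (E.rem_pos_iff hmn j le_rfl).mp (by rw [E.rem_zero]; norm_num)

lemma eats_congr (i : Fin n) {s1 s2 : ℝ} (h1 : 0 ≤ s1) (h2 : 0 ≤ s2)
    (hiff : ∀ j, 0 < E.rem j s1 ↔ 0 < E.rem j s2) : E.eats i s1 = E.eats i s2 := by
  cases h : E.eats i s1 with
  | none =>
    cases h' : E.eats i s2 with
    | none => rfl
    | some j2 =>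
      have hp : 0 < E.rem j2 s1 := (hiff j2).mpr (E.eats_pos h2 h')
      obtain ⟨j', hj', -, -⟩ := E.exists_eats i h1 hp
      rw [h] at hj'; exact absurd hj' (by simp)
  | some j =>
    exact ((E.eats_iff'' i h2 j).mpr ⟨(hiff j).mp (E.eats_pos h1 h),
      fun j' hj' => E.eats_min h1 h ((hiff j').mpr hj')⟩).symm

lemma eats_const_on (hmn : m ≤ n) (i : Fin n) {p q : ℝ} (hp : 0 ≤ p)
    (hev : ∀ j, ¬ (p < E.tauF j ∧ E.tauF j < q)) {s1 s2 : ℝ}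
    (hs1 : s1 ∈ Set.Ioo p q) (hs2 : s2 ∈ Set.Ioo p q) :
    E.eats i s1 = E.eats i s2 := by
  have h0 : ∀ s ∈ Set.Ioo p q, (0:ℝ) ≤ s := fun s hs => hp.trans hs.1.le
  apply E.eats_congr i (h0 s1 hs1) (h0 s2 hs2)
  intro j
  rw [E.rem_pos_iff hmn j (h0 s1 hs1), E.rem_pos_iff hmn j (h0 s2 hs2)]
  have key : ∀ s ∈ Set.Ioo p q, (s < E.tauF j ↔ q ≤ E.tauF j) := by
    intro s hs
    rcases le_or_gt q (E.tauF j) with h | h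
    · exact iff_of_true (lt_of_lt_of_le hs.2 h) h
    · have hτp : E.tauF j ≤ p := by
        by_contra hc; push_neg at hc; exact hev j ⟨hc, h⟩
      exact iff_of_false (not_lt.mpr (hτp.trans hs.1.le)) (not_le.mpr h)
  rw [key s1 hs1, key s2 hs2]

lemma rem_linear {p q : ℝ} (h0p : 0 ≤ p) (e : Fin n → Option (Fin m))
    (he : ∀ i : Fin n, ∀ s ∈ Set.Ioo p q, E.eats i s = e i)
    (j : Fin m) {a b : ℝ} (hpa : p ≤ a) (hab : a ≤ b) (hbq : b ≤ q) :
    E.rem j a - E.rem j b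
      = (b - a) * ((Finset.univ.filter fun i => e i = some j).card : ℝ) := by
  rw [E.rem_sub j (h0p.trans hpa) hab]
  have key : ∀ i : Fin n,
      (volume {s : ℝ | a < s ∧ s ≤ b ∧ E.eats i s = some j}).toReal
        = if e i = some j then b - a else 0 := by
    intro i
    by_cases hc : e i = some j
    · rw [if_pos hc]
      have hsub : Set.Ioo a b ⊆ {s : ℝ | a < s ∧ s ≤ b ∧ E.eats i s = some j} := by
        intro s hs
        exact ⟨hs.1, hs.2.le, by
          rw [he i s ⟨lt_of_le_of_lt hpa hs.1, lt_of_lt_of_le hs.2 hbq⟩]; exact hc⟩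
      have h1 : ENNReal.ofReal (b - a) ≤ volume {s : ℝ | a < s ∧ s ≤ b ∧ E.eats i s = some j} := by
        calc ENNReal.ofReal (b - a) = volume (Set.Ioo a b) := (Real.volume_Ioo).symm
          _ ≤ _ := measure_mono hsub
      have heq := le_antisymm (E.volES_le i j) h1
      rw [heq, ENNReal.toReal_ofReal (by linarith)]
    · rw [if_neg hc]
      have hsub : {s : ℝ | a < s ∧ s ≤ b ∧ E.eats i s = some j} ⊆ {b} := by
        intro s hs
        rcases lt_or_eq_of_le hs.2.1 with h | h
        · exfalso; apply hc
          rw [← he i s ⟨lt_of_le_of_lt hpa hs.1, lt_of_lt_of_le h hbq⟩]; exact hs.2.2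
        · exact h
      have hz : volume {s : ℝ | a < s ∧ s ≤ b ∧ E.eats i s = some j} = 0 :=
        le_antisymm ((measure_mono hsub).trans (by simp)) (zero_le)
      rw [hz]; simp
  rw [Finset.sum_congr rfl (fun i _ => key i), ← Finset.sum_filter, Finset.sum_const,
    nsmul_eq_mul, mul_comm]

end Aux3

end PSExec
namespace PSExec

/-- Telescoping a one-step estimate over a finite set of cut points. -/
lemma telescope : ∀ (C : Finset ℝ) (F : ℝ → ℝ) (p q : ℝ), p ∈ C → q ∈ C →
    (∀ x ∈ C, p ≤ x ∧ x ≤ q) →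
    (∀ a ∈ C, ∀ b ∈ C, a < b → (∀ x ∈ C, ¬(a < x ∧ x < b)) → F b - F a ≤ b - a) →
    F q - F p ≤ q - p := by
  intro C
  induction C using Finset.strongInduction with
  | _ C ih =>
    intro F p q hp hq hsub hstep
    rcases eq_or_lt_of_le (hsub q hq).1 with heq | hlt
    · rw [← heq]; simp
    · set C' := C.filter (fun x => x < q) with hC'
      have hpC' : p ∈ C' := by
        rw [hC', Finset.mem_filter]; exact ⟨hp, hlt⟩
      have hC'ne : C'.Nonempty := ⟨p, hpC'⟩
      set a := C'.max' hC'ne with ha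
      have haC' : a ∈ C' := C'.max'_mem hC'ne
      have haC : a ∈ C := (Finset.mem_filter.mp haC').1
      have haq : a < q := (Finset.mem_filter.mp haC').2
      have hstep1 : F q - F a ≤ q - a := by
        apply hstep a haC q hq haq
        intro x hx hxx
        have hxC' : x ∈ C' := Finset.mem_filter.mpr ⟨hx, hxx.2⟩
        exact absurd (Finset.le_max' C' x hxC') (not_le.mpr hxx.1)
      have hss : C' ⊂ C := by
        refine (Finset.ssubset_iff_of_subset (Finset.filter_subset _ _)).mpr ?_
        exact ⟨q, hq, by simp [hC']⟩
      have hstep2 : F a - F p ≤ a - p := by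
        apply ih C' hss F p a hpC' haC'
        · intro x hx
          exact ⟨(hsub x (Finset.mem_filter.mp hx).1).1, Finset.le_max' C' x hx⟩
        · intro x hx y hy hxy hno
          apply hstep x (Finset.mem_filter.mp hx).1 y (Finset.mem_filter.mp hy).1 hxy
          intro z hz hzz
          have hzq : z < q := hzz.2.trans_le ((Finset.le_max' C' y hy).trans haq.le)
          exact hno z (Finset.mem_filter.mpr ⟨hz, hzq⟩) hzz
      linarith

section Comb

variable {n m : ℕ} {rk rk' : Fin n → Fin m → ℕ}
variable (E : PSExec n m rk (fun _ _ => True)) (E' : PSExec n m rk' (fun _ _ => True))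

/-- Helper: a sum of indicators over a finset of items, for a fixed option value. -/
lemma sum_ite_option (P : Finset (Fin m)) (o : Option (Fin m)) :
    (∑ j ∈ P, if o = some j then (1:ℝ) else 0)
      = if ∃ j ∈ P, o = some j then 1 else 0 := by
  cases o with
  | none => simp
  | some j0 =>
    have h1 : ∀ j ∈ P, (if (some j0 : Option (Fin m)) = some j then (1:ℝ) else 0)
        = if j = j0 then 1 else 0 := by
      intro j _
      simp [eq_comm, Option.some_inj]
    rw [Finset.sum_congr rfl h1, Finset.sum_ite_eq' P j0 (fun _ => (1:ℝ))]
    simp [Option.some_inj, eq_comm]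

/-- The key combinatorial inequality, pointwise in time. -/
lemma comb (hrk : ∀ i, Function.Injective (rk i))
    (i1 : Fin n) (hsame : ∀ i, i ≠ i1 → rk' i = rk i)
    {T : ℝ} (s : ℝ) (hs0 : 0 ≤ s) (hsT : s ≤ T) :
    ∑ j ∈ Finset.univ.filter (fun j => E.rem j T = 0 ∧ E.rem j s < E'.rem j s),
        (((Finset.univ.filter fun i => E.eats i s = some j).card : ℝ)
          - ((Finset.univ.filter fun i => E'.eats i s = some j).card : ℝ)) ≤ 1 := by
  set P := Finset.univ.filter (fun j => E.rem j T = 0 ∧ E.rem j s < E'.rem j s) with hP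
  have hcard : ∀ (E₀ : PSExec n m rk (fun _ _ => True)), True := fun _ => trivial
  have hrw : ∀ (f : Fin n → Option (Fin m)),
      ∑ j ∈ P, ((Finset.univ.filter fun i => f i = some j).card : ℝ)
        = ∑ i : Fin n, if ∃ j ∈ P, f i = some j then (1:ℝ) else 0 := by
    intro f
    have h1 : ∀ j ∈ P, ((Finset.univ.filter fun i => f i = some j).card : ℝ)
        = ∑ i : Fin n, if f i = some j then (1:ℝ) else 0 := by
      intro j _
      rw [Finset.card_filter]
      push_cast
      rfl
    rw [Finset.sum_congr rfl h1, Finset.sum_comm]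
    exact Finset.sum_congr rfl (fun i _ => sum_ite_option P (f i))
  rw [Finset.sum_sub_distrib, hrw (fun i => E.eats i s), hrw (fun i => E'.eats i s),
    ← Finset.sum_sub_distrib]
  have hper : ∀ i : Fin n,
      ((if ∃ j ∈ P, E.eats i s = some j then (1:ℝ) else 0)
        - (if ∃ j ∈ P, E'.eats i s = some j then (1:ℝ) else 0))
      ≤ if i = i1 then 1 else 0 := by
    intro i
    by_cases hex : ∃ j ∈ P, E.eats i s = some j
    · by_cases hi : i = i1
      · rw [if_pos hex, if_pos hi]
        split <;> norm_num
      · obtain ⟨j, hjP, hje⟩ := hex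
        rw [hP, Finset.mem_filter] at hjP
        obtain ⟨-, hjT, hjlt⟩ := hjP
        have hpos : 0 < E.rem j s := E.eats_pos hs0 hje
        have hpos' : 0 < E'.rem j s := lt_of_le_of_lt hpos.le hjlt
        obtain ⟨js, hjs, hjspos, hjsmin⟩ := E'.exists_eats i hs0 hpos'
        have hex' : ∃ j' ∈ P, E'.eats i s = some j' := by
          refine ⟨js, ?_, hjs⟩
          by_cases hjj : js = j
          · rw [hjj]; rw [hP, Finset.mem_filter]
            exact ⟨Finset.mem_univ j, hjT, hjlt⟩
          · have hle : rk i js ≤ rk i j := by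
              have := hjsmin j hpos'
              rwa [hsame i hi] at this
            have hlt : rk i js < rk i j := lt_of_le_of_ne hle (fun hc => hjj (hrk i hc))
            have hnot : ¬ 0 < E.rem js s := fun hc =>
              absurd (E.eats_min hs0 hje hc) (not_le.mpr hlt)
            have hz : E.rem js s = 0 := le_antisymm (not_lt.mp hnot) (E.rem_nonneg js hs0)
            rw [hP, Finset.mem_filter]
            refine ⟨Finset.mem_univ js, E.rem_stay js hs0 hsT hz, ?_⟩
            rw [hz]; exact hjspos
        rw [if_pos ⟨j, by rw [hP, Finset.mem_filter]; exact ⟨Finset.mem_univ j, hjT, hjlt⟩, hje⟩,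
          if_pos hex', if_neg hi]
        norm_num
    · rw [if_neg hex]
      split <;> split <;> norm_num
  calc ∑ i : Fin n, ((if ∃ j ∈ P, E.eats i s = some j then (1:ℝ) else 0)
        - (if ∃ j ∈ P, E'.eats i s = some j then (1:ℝ) else 0))
      ≤ ∑ i : Fin n, if i = i1 then (1:ℝ) else 0 := Finset.sum_le_sum (fun i _ => hper i)
    _ = 1 := by rw [Finset.sum_ite_eq' Finset.univ i1 (fun _ => (1:ℝ))]; simp

end Comb

end PSExec
namespace PSExec

/-- Pure algebra: a sign change of an affine function locates its zero strictly inside. -/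
lemma cross_point {gx gy cc x y : ℝ} (hxy : x < y) (hlin : gy - gx = (y - x) * cc)
    (hcc : cc ≠ 0) (h : gx * gy < 0) :
    x < x - gx / cc ∧ x - gx / cc < y := by
  have h5 : (x - y) * cc = gx - gy := by linear_combination hlin
  rcases mul_neg_iff.mp h with ⟨h1, h2⟩ | ⟨h1, h2⟩
  · -- 0 < gx, gy < 0, so cc < 0
    have hcneg : cc < 0 := by
      rcases lt_trichotomy cc 0 with hc | hc | hc
      · exact hc
      · exact absurd hc hcc
      · have := mul_pos (by linarith : (0:ℝ) < y - x) hc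
        linarith
    constructor
    · have := div_neg_of_pos_of_neg h1 hcneg
      linarith
    · have h4 : x - y < gx / cc := by
        rw [lt_div_iff_of_neg hcneg]
        linarith [h5]
      linarith
  · -- gx < 0, 0 < gy, so 0 < cc
    have hcpos : 0 < cc := by
      rcases lt_trichotomy cc 0 with hc | hc | hc
      · have := mul_pos (by linarith : (0:ℝ) < y - x) (by linarith : 0 < -cc)
        nlinarith
      · exact absurd hc hcc
      · exact hc
    constructor
    · have := div_neg_of_neg_of_pos h1 hcpos
      linarith
    · have h4 : x - y < gx / cc := by
        rw [lt_div_iff₀ hcpos]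
        linarith [h5]
      linarith

section FStep

variable {n m : ℕ} {rk rk' : Fin n → Fin m → ℕ}
variable (E : PSExec n m rk (fun _ _ => True)) (E' : PSExec n m rk' (fun _ _ => True))

lemma Fstep (hmn : m ≤ n) (hrk : ∀ i, Function.Injective (rk i))
    (i1 : Fin n) (hsame : ∀ i, i ≠ i1 → rk' i = rk i)
    {T a b : ℝ} (h0a : 0 ≤ a) (hab : a ≤ b) (hbT : b ≤ T)
    (hevE : ∀ j, ¬(a < E.tauF j ∧ E.tauF j < b))
    (hevE' : ∀ j, ¬(a < E'.tauF j ∧ E'.tauF j < b)) :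
    (∑ j ∈ Finset.univ.filter (fun j => E.rem j T = 0), max (E'.rem j b - E.rem j b) 0)
      - (∑ j ∈ Finset.univ.filter (fun j => E.rem j T = 0), max (E'.rem j a - E.rem j a) 0)
    ≤ b - a := by
  rcases eq_or_lt_of_le hab with rfl | hab'
  · simp
  set D := Finset.univ.filter (fun j => E.rem j T = 0) with hD
  set mid := (a + b) / 2 with hmid
  have hmidIoo : mid ∈ Set.Ioo a b := ⟨by rw [hmid]; linarith, by rw [hmid]; linarith⟩
  have heE : ∀ i : Fin n, ∀ s ∈ Set.Ioo a b, E.eats i s = E.eats i mid :=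
    fun i s hs => E.eats_const_on hmn i h0a hevE hs hmidIoo
  have heE' : ∀ i : Fin n, ∀ s ∈ Set.Ioo a b, E'.eats i s = E'.eats i mid :=
    fun i s hs => E'.eats_const_on hmn i h0a hevE' hs hmidIoo
  set c : Fin m → ℝ := fun j =>
    ((Finset.univ.filter fun i => E.eats i mid = some j).card : ℝ)
      - ((Finset.univ.filter fun i => E'.eats i mid = some j).card : ℝ) with hc
  set g : Fin m → ℝ → ℝ := fun j t => E'.rem j t - E.rem j t with hg
  have hglin : ∀ j : Fin m, ∀ x y : ℝ, a ≤ x → x ≤ y → y ≤ b →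
      g j y - g j x = (y - x) * c j := by
    intro j x y hax hxy hyb
    have h1 := E.rem_linear h0a (fun i => E.eats i mid) heE j hax hxy hyb
    have h2 := E'.rem_linear h0a (fun i => E'.eats i mid) heE' j hax hxy hyb
    rw [hg, hc]
    simp only
    linear_combination h1 - h2
  set C : Finset ℝ := insert a (insert b
    ((Finset.univ.image (fun j : Fin m => a - g j a / c j)).filter
      (fun z => a < z ∧ z < b))) with hC
  have hCsub : ∀ x ∈ C, a ≤ x ∧ x ≤ b := by
    intro x hx
    rw [hC] at hx
    rcases Finset.mem_insert.mp hx with rfl | hx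
    · exact ⟨le_rfl, hab⟩
    · rcases Finset.mem_insert.mp hx with rfl | hx
      · exact ⟨hab, le_rfl⟩
      · have h := (Finset.mem_filter.mp hx).2
        exact ⟨h.1.le, h.2.le⟩
  have hmem_a : a ∈ C := by rw [hC]; exact Finset.mem_insert_self _ _
  have hmem_b : b ∈ C := by
    rw [hC]; exact Finset.mem_insert.mpr (Or.inr (Finset.mem_insert_self _ _))
  refine telescope C (fun t => ∑ j ∈ D, max (E'.rem j t - E.rem j t) 0) a b hmem_a hmem_b hCsub ?_
  intro a' ha'C b' hb'C ha'b' hnob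
  have haa' : a ≤ a' := (hCsub a' ha'C).1
  have hb'b : b' ≤ b := (hCsub b' hb'C).2
  set mid' := (a' + b') / 2 with hmid'
  have hm1 : a' < mid' := by rw [hmid']; linarith
  have hm2 : mid' < b' := by rw [hmid']; linarith
  have hmid'Ioo : mid' ∈ Set.Ioo a b := ⟨lt_of_le_of_lt haa' hm1, lt_of_lt_of_le hm2 hb'b⟩
  have h0mid' : (0:ℝ) ≤ mid' := h0a.trans hmid'Ioo.1.le
  have hmid'T : mid' ≤ T := hmid'Ioo.2.le.trans hbT
  -- no zero of g j inside (a',b') when c j ≠ 0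
  have hzero : ∀ j : Fin m, c j ≠ 0 → ∀ z : ℝ, a' < z → z < b' → g j z ≠ 0 := by
    intro j hcj z hz1 hz2 hgz
    have haz : a ≤ z := haa'.trans hz1.le
    have hzb : z ≤ b := hz2.le.trans hb'b
    have hlin := hglin j a z le_rfl haz hzb
    rw [hgz] at hlin
    have h6 : (z - a) * c j = - g j a := by linarith [hlin]
    have h7 : g j a / c j = a - z := by
      rw [div_eq_iff hcj]
      linear_combination h6
    have hzeq : z = a - g j a / c j := by linarith [h7]
    have hzC : z ∈ C := by
      rw [hC]
      refine Finset.mem_insert.mpr (Or.inr (Finset.mem_insert.mpr (Or.inr ?_)))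
      refine Finset.mem_filter.mpr ⟨Finset.mem_image.mpr ⟨j, Finset.mem_univ j, hzeq.symm⟩,
        lt_of_le_of_lt haa' hz1, lt_of_lt_of_le hz2 hb'b⟩
    exact hnob z hzC ⟨hz1, hz2⟩
  -- opposite strict signs inside [a',b'] are impossible when c j ≠ 0
  have hopp : ∀ j : Fin m, c j ≠ 0 → ∀ x y : ℝ, a' ≤ x → x < y → y ≤ b' →
      g j x * g j y < 0 → False := by
    intro j hcj x y hx hxy hy hprod
    have hax : a ≤ x := haa'.trans hx
    have hyb : y ≤ b := hy.trans hb'b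
    have hlinxy := hglin j x y hax hxy.le hyb
    obtain ⟨hc1, hc2⟩ := cross_point hxy hlinxy hcj hprod
    set z := x - g j x / c j with hzdef
    have hgz : g j z = 0 := by
      have h8 := hglin j x z hax hc1.le (hc2.le.trans hyb)
      have h9 : z - x = - g j x / c j := by rw [hzdef]; ring
      rw [h9, div_mul_cancel₀ _ hcj] at h8
      linarith
    exact hzero j hcj z (lt_of_le_of_lt hx hc1) (lt_of_lt_of_le hc2 hy) hgz
  -- per-item computation of the increment of the positive part
  have hsign : ∀ j : Fin m,
      (max (g j b') 0 - max (g j a') 0) = if 0 < g j mid' then (b' - a') * c j else 0 := by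
    intro j
    have hAB := hglin j a' b' haa' ha'b'.le hb'b
    by_cases hcj : c j = 0
    · have hA := hglin j a' mid' haa' hm1.le (hm2.le.trans hb'b)
      rw [hcj] at hA hAB
      simp only [mul_zero] at hA hAB
      have h1 : g j a' = g j b' := by linarith
      rw [h1, hcj]
      split <;> simp
    · have hgm : g j mid' ≠ 0 := hzero j hcj mid' hm1 hm2
      rcases lt_or_gt_of_ne hgm with hneg | hpos
      · have hga : g j a' ≤ 0 := by
          by_contra hcc; push_neg at hcc
          exact hopp j hcj a' mid' le_rfl hm1 hm2.le (mul_neg_of_pos_of_neg hcc hneg)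
        have hgb : g j b' ≤ 0 := by
          by_contra hcc; push_neg at hcc
          exact hopp j hcj mid' b' hm1.le hm2 le_rfl (mul_neg_of_neg_of_pos hneg hcc)
        rw [if_neg (not_lt.mpr hneg.le), max_eq_right hga, max_eq_right hgb, sub_zero]
      · have hga : 0 ≤ g j a' := by
          by_contra hcc; push_neg at hcc
          exact hopp j hcj a' mid' le_rfl hm1 hm2.le (mul_neg_of_neg_of_pos hcc hpos)
        have hgb : 0 ≤ g j b' := by
          by_contra hcc; push_neg at hcc
          exact hopp j hcj mid' b' hm1.le hm2 le_rfl (mul_neg_of_pos_of_neg hpos hcc)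
        rw [if_pos hpos, max_eq_left hga, max_eq_left hgb]
        linarith [hAB]
  -- sum it up and use the combinatorial lemma at mid'
  have hcnt : ∀ j : Fin m, c j
      = ((Finset.univ.filter fun i => E.eats i mid' = some j).card : ℝ)
        - ((Finset.univ.filter fun i => E'.eats i mid' = some j).card : ℝ) := by
    intro j
    have h1 : (Finset.univ.filter fun i => E.eats i mid' = some j)
        = (Finset.univ.filter fun i => E.eats i mid = some j) := by
      apply Finset.filter_congr
      intro i _
      rw [heE i mid' hmid'Ioo]
    have h2 : (Finset.univ.filter fun i => E'.eats i mid' = some j)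
        = (Finset.univ.filter fun i => E'.eats i mid = some j) := by
      apply Finset.filter_congr
      intro i _
      rw [heE' i mid' hmid'Ioo]
    rw [hc, h1, h2]
  have hfil : D.filter (fun j => 0 < g j mid')
      = Finset.univ.filter (fun j => E.rem j T = 0 ∧ E.rem j mid' < E'.rem j mid') := by
    rw [hD, Finset.filter_filter]
    apply Finset.filter_congr
    intro j _
    rw [hg]
    simp [sub_pos]
  have hcomb := comb E E' hrk i1 hsame mid' h0mid' hmid'T
  calc (∑ j ∈ D, max (E'.rem j b' - E.rem j b') 0)
        - (∑ j ∈ D, max (E'.rem j a' - E.rem j a') 0)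
      = ∑ j ∈ D, (max (g j b') 0 - max (g j a') 0) := by
        rw [← Finset.sum_sub_distrib]
    _ = ∑ j ∈ D, (if 0 < g j mid' then (b' - a') * c j else 0) :=
        Finset.sum_congr rfl (fun j _ => hsign j)
    _ = (b' - a') * ∑ j ∈ D.filter (fun j => 0 < g j mid'), c j := by
        rw [← Finset.sum_filter, Finset.mul_sum]
    _ ≤ (b' - a') * 1 := by
        apply mul_le_mul_of_nonneg_left ?_ (by linarith)
        rw [hfil]
        calc ∑ j ∈ Finset.univ.filter (fun j => E.rem j T = 0 ∧ E.rem j mid' < E'.rem j mid'), c j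
            = ∑ j ∈ Finset.univ.filter (fun j => E.rem j T = 0 ∧ E.rem j mid' < E'.rem j mid'),
                (((Finset.univ.filter fun i => E.eats i mid' = some j).card : ℝ)
                  - ((Finset.univ.filter fun i => E'.eats i mid' = some j).card : ℝ)) :=
              Finset.sum_congr rfl (fun j _ => hcnt j)
          _ ≤ 1 := hcomb
    _ = b' - a' := mul_one _

end FStep

end PSExec
namespace PSExec

section FBound

variable {n m : ℕ} {rk rk' : Fin n → Fin m → ℕ}
variable (E : PSExec n m rk (fun _ _ => True)) (E' : PSExec n m rk' (fun _ _ => True))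

lemma Fbound (hmn : m ≤ n) (hrk : ∀ i, Function.Injective (rk i))
    (i1 : Fin n) (hsame : ∀ i, i ≠ i1 → rk' i = rk i)
    {T : ℝ} (hT0 : 0 ≤ T) :
    ∑ j ∈ Finset.univ.filter (fun j => E.rem j T = 0), E'.rem j T ≤ T := by
  set F : ℝ → ℝ := fun t => ∑ j ∈ Finset.univ.filter (fun j => E.rem j T = 0),
    max (E'.rem j t - E.rem j t) 0 with hF
  set EV : Finset ℝ := insert 0 (insert T
    ((Finset.univ.image E.tauF ∪ Finset.univ.image E'.tauF).filter
      (fun z => 0 < z ∧ z < T))) with hEV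
  have hsub : ∀ x ∈ EV, 0 ≤ x ∧ x ≤ T := by
    intro x hx
    rw [hEV] at hx
    rcases Finset.mem_insert.mp hx with rfl | hx
    · exact ⟨le_rfl, hT0⟩
    · rcases Finset.mem_insert.mp hx with rfl | hx
      · exact ⟨hT0, le_rfl⟩
      · have h := (Finset.mem_filter.mp hx).2
        exact ⟨h.1.le, h.2.le⟩
  have h0EV : (0:ℝ) ∈ EV := by rw [hEV]; exact Finset.mem_insert_self _ _
  have hTEV : T ∈ EV := by
    rw [hEV]; exact Finset.mem_insert.mpr (Or.inr (Finset.mem_insert_self _ _))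
  have htel : F T - F 0 ≤ T - 0 := by
    apply telescope EV F 0 T h0EV hTEV hsub
    intro a haEV b hbEV hab hno
    apply Fstep E E' hmn hrk i1 hsame (hsub a haEV).1 hab.le (hsub b hbEV).2
    · intro j hj
      have h0τ : 0 < E.tauF j := lt_of_le_of_lt (hsub a haEV).1 hj.1
      have hτT : E.tauF j < T := lt_of_lt_of_le hj.2 (hsub b hbEV).2
      have hmem : E.tauF j ∈ EV := by
        rw [hEV]
        refine Finset.mem_insert.mpr (Or.inr (Finset.mem_insert.mpr (Or.inr ?_)))
        exact Finset.mem_filter.mpr ⟨Finset.mem_union.mpr (Or.inl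
          (Finset.mem_image.mpr ⟨j, Finset.mem_univ j, rfl⟩)), h0τ, hτT⟩
      exact hno _ hmem hj
    · intro j hj
      have h0τ : 0 < E'.tauF j := lt_of_le_of_lt (hsub a haEV).1 hj.1
      have hτT : E'.tauF j < T := lt_of_lt_of_le hj.2 (hsub b hbEV).2
      have hmem : E'.tauF j ∈ EV := by
        rw [hEV]
        refine Finset.mem_insert.mpr (Or.inr (Finset.mem_insert.mpr (Or.inr ?_)))
        exact Finset.mem_filter.mpr ⟨Finset.mem_union.mpr (Or.inr
          (Finset.mem_image.mpr ⟨j, Finset.mem_univ j, rfl⟩)), h0τ, hτT⟩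
      exact hno _ hmem hj
  have hF0 : F 0 = 0 := by
    rw [hF]
    apply Finset.sum_eq_zero
    intro j _
    rw [E.rem_zero, E'.rem_zero]
    simp
  have hFT : F T = ∑ j ∈ Finset.univ.filter (fun j => E.rem j T = 0), E'.rem j T := by
    rw [hF]
    apply Finset.sum_congr rfl
    intro j hj
    rw [(Finset.mem_filter.mp hj).2, sub_zero]
    exact max_eq_left (E'.rem_nonneg j hT0)
  linarith

end FBound

end PSExec
namespace PSExec
open scoped ENNReal

section Eaters

variable {n m : ℕ} {rk rk' : Fin n → Fin m → ℕ}
variable (E : PSExec n m rk (fun _ _ => True)) (E' : PSExec n m rk' (fun _ _ => True))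

lemma three_eaters (hmn : m ≤ n) {j : Fin m} {T : ℝ} (hτT : E.tauF j ≤ T) (hT : T < 1/2) :
    ∃ s0 : ℝ, 0 < s0 ∧ s0 < E.tauF j ∧
      3 ≤ (Finset.univ.filter fun i => E.eats i s0 = some j).card := by
  by_contra hcon
  push_neg at hcon
  set τ := E.tauF j with hτdef
  obtain ⟨hτz, hτ0, -⟩ := E.tau_spec hmn j
  have hτpos : 0 < τ := E.tau_pos hmn j
  have hone : (1:ℝ) = ∑ i : Fin n,
      (volume {s : ℝ | 0 < s ∧ s ≤ τ ∧ E.eats i s = some j}).toReal := by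
    have h := E.rem_sub j le_rfl hτ0
    rw [E.rem_zero] at h
    rw [← hτdef] at h
    rw [hτz] at h
    linarith
  have hkey : ∀ i : Fin n, volume {s : ℝ | 0 < s ∧ s ≤ τ ∧ E.eats i s = some j}
      = volume {s : ℝ | 0 < s ∧ s < τ ∧ E.eats i s = some j} := by
    intro i
    apply le_antisymm
    · calc volume {s : ℝ | 0 < s ∧ s ≤ τ ∧ E.eats i s = some j}
          ≤ volume ({s : ℝ | 0 < s ∧ s < τ ∧ E.eats i s = some j} ∪ {τ}) := by
            apply measure_mono
            rintro s ⟨hs1, hs2, hs3⟩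
            rcases lt_or_eq_of_le hs2 with h | h
            · exact Or.inl ⟨hs1, h, hs3⟩
            · exact Or.inr (by simp [h])
        _ ≤ volume {s : ℝ | 0 < s ∧ s < τ ∧ E.eats i s = some j} + volume ({τ} : Set ℝ) :=
            measure_union_le _ _
        _ = volume {s : ℝ | 0 < s ∧ s < τ ∧ E.eats i s = some j} := by simp
    · apply measure_mono
      rintro s ⟨hs1, hs2, hs3⟩
      exact ⟨hs1, hs2.le, hs3⟩
  have hmeasB : ∀ i : Fin n, MeasurableSet {s : ℝ | 0 < s ∧ s < τ ∧ E.eats i s = some j} := by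
    intro i
    have h : {s : ℝ | 0 < s ∧ s < τ ∧ E.eats i s = some j}
        = Set.Ioo 0 τ ∩ {t : ℝ | E.eats i t = some j} := by
      ext s; simp only [Set.mem_setOf_eq, Set.mem_inter_iff, Set.mem_Ioo]; tauto
    rw [h]; exact measurableSet_Ioo.inter (E.meas i j)
  have hsum_meas : ∑ i : Fin n, volume {s : ℝ | 0 < s ∧ s < τ ∧ E.eats i s = some j}
      = ∫⁻ s : ℝ, ∑ i : Fin n,
        Set.indicator {u : ℝ | 0 < u ∧ u < τ ∧ E.eats i u = some j} (fun _ => (1:ℝ≥0∞)) s := by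
    rw [MeasureTheory.lintegral_finset_sum]
    · apply Finset.sum_congr rfl
      intro i _
      rw [MeasureTheory.lintegral_indicator_const (hmeasB i) 1]
      simp
    · intro i _
      exact measurable_const.indicator (hmeasB i)
  have hpoint : ∀ s : ℝ,
      (∑ i : Fin n,
        Set.indicator {u : ℝ | 0 < u ∧ u < τ ∧ E.eats i u = some j} (fun _ => (1:ℝ≥0∞)) s)
      ≤ Set.indicator (Set.Ioo (0:ℝ) τ) (fun _ => (2:ℝ≥0∞)) s := by
    intro s
    by_cases hs : s ∈ Set.Ioo (0:ℝ) τ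
    · rw [Set.indicator_of_mem hs]
      have hrw : ∀ i : Fin n,
          Set.indicator {u : ℝ | 0 < u ∧ u < τ ∧ E.eats i u = some j} (fun _ => (1:ℝ≥0∞)) s
            = if E.eats i s = some j then 1 else 0 := by
        intro i
        by_cases he : E.eats i s = some j
        · rw [Set.indicator_of_mem
            (show s ∈ {u : ℝ | 0 < u ∧ u < τ ∧ E.eats i u = some j} from ⟨hs.1, hs.2, he⟩),
            if_pos he]
        · rw [Set.indicator_of_notMem (fun hc => he hc.2.2), if_neg he]
      rw [Finset.sum_congr rfl (fun i _ => hrw i), Finset.sum_boole]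
      have h2 : (Finset.univ.filter fun i => E.eats i s = some j).card ≤ 2 := by
        have := hcon s hs.1 hs.2
        omega
      exact_mod_cast Nat.cast_le.mpr h2
    · rw [Set.indicator_of_notMem hs]
      have hrw : ∀ i : Fin n,
          Set.indicator {u : ℝ | 0 < u ∧ u < τ ∧ E.eats i u = some j} (fun _ => (1:ℝ≥0∞)) s
            = 0 := by
        intro i
        exact Set.indicator_of_notMem (fun hc => hs ⟨hc.1, hc.2.1⟩) _
      rw [Finset.sum_congr rfl (fun i _ => hrw i)]
      simp
  have hineq : ∑ i : Fin n, volume {s : ℝ | 0 < s ∧ s < τ ∧ E.eats i s = some j}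
      ≤ 2 * ENNReal.ofReal τ := by
    rw [hsum_meas]
    calc ∫⁻ s : ℝ, ∑ i : Fin n,
          Set.indicator {u : ℝ | 0 < u ∧ u < τ ∧ E.eats i u = some j} (fun _ => (1:ℝ≥0∞)) s
        ≤ ∫⁻ s : ℝ, Set.indicator (Set.Ioo (0:ℝ) τ) (fun _ => (2:ℝ≥0∞)) s :=
          MeasureTheory.lintegral_mono hpoint
      _ = 2 * volume (Set.Ioo (0:ℝ) τ) := by
          rw [MeasureTheory.lintegral_indicator_const measurableSet_Ioo 2]
      _ = 2 * ENNReal.ofReal τ := by rw [Real.volume_Ioo, sub_zero]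
  have hfin : ∀ i : Fin n, volume {s : ℝ | 0 < s ∧ s < τ ∧ E.eats i s = some j} ≠ ⊤ := by
    intro i
    have hle : volume {s : ℝ | 0 < s ∧ s < τ ∧ E.eats i s = some j}
        ≤ volume (Set.Ioo (0:ℝ) τ) := measure_mono (fun s hs => ⟨hs.1, hs.2.1⟩)
    intro hc
    rw [hc] at hle
    simp [Real.volume_Ioo] at hle
  have hreal : (1:ℝ) ≤ 2 * τ := by
    have h1 : (1:ℝ) = ∑ i : Fin n,
        (volume {s : ℝ | 0 < s ∧ s < τ ∧ E.eats i s = some j}).toReal := by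
      rw [hone]
      exact Finset.sum_congr rfl (fun i _ => by rw [hkey i])
    have h2 : ∑ i : Fin n, (volume {s : ℝ | 0 < s ∧ s < τ ∧ E.eats i s = some j}).toReal
        = (∑ i : Fin n, volume {s : ℝ | 0 < s ∧ s < τ ∧ E.eats i s = some j}).toReal :=
      (ENNReal.toReal_sum (fun i _ => hfin i)).symm
    have h3 : (∑ i : Fin n, volume {s : ℝ | 0 < s ∧ s < τ ∧ E.eats i s = some j}).toReal
        ≤ (2 * ENNReal.ofReal τ).toReal := by
      apply ENNReal.toReal_mono _ hineq
      simp [ENNReal.mul_eq_top]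
    have h4 : (2 * ENNReal.ofReal τ).toReal = 2 * τ := by
      rw [ENNReal.toReal_mul, ENNReal.toReal_ofReal hτpos.le]
      simp
    linarith
  linarith

lemma second_eaters (hmn : m ≤ n) (hrk : ∀ i, Function.Injective (rk i))
    (i1 : Fin n) (hsame : ∀ i, i ≠ i1 → rk' i = rk i)
    (Obar : Finset (Fin m)) {T : ℝ} (hT : E.exhaustTime Obar T) (hT0 : 0 < T)
    (hThalf : T < 1/2)
    {s : ℝ} (hsS : T < s) {j : Fin m} (hjO : j ∈ Obar) (hje : E'.eats i1 s = some j) :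
    3 ≤ (Finset.univ.filter
      (fun i => ∃ j', E.rem j' T = 0 ∧ E'.eats i s = some j')).card := by
  have hτT : E.tauF j ≤ T := E.tau_le_of_zero j hT0.le (hT.1 j hjO)
  obtain ⟨s0, hs00, hs0τ, hcard⟩ := E.three_eaters hmn hτT hThalf
  have hs0T : s0 ≤ T := hs0τ.le.trans hτT
  set Et := Finset.univ.filter (fun i => E.eats i s0 = some j) with hEt
  have h2 : 1 < (Et.erase i1).card := by
    by_cases hi1 : i1 ∈ Et
    · rw [Finset.card_erase_of_mem hi1]; omega
    · rw [Finset.erase_eq_of_notMem hi1]; omega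
  obtain ⟨i2, hi2, i3, hi3, hne23⟩ := Finset.one_lt_card.mp h2
  have hss : (0:ℝ) ≤ s := hT0.le.trans hsS.le
  have hremj : 0 < E'.rem j s := E'.eats_pos hss hje
  have hGP : ∀ i : Fin n, i ∈ Et.erase i1 →
      ∃ j', E.rem j' T = 0 ∧ E'.eats i s = some j' := by
    intro i hi
    have hine : i ≠ i1 := Finset.ne_of_mem_erase hi
    have hike : E.eats i s0 = some j :=
      (Finset.mem_filter.mp (Finset.mem_of_mem_erase hi)).2
    obtain ⟨js, hjs, hjspos, hjsmin⟩ := E'.exists_eats i hss hremj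
    refine ⟨js, ?_, hjs⟩
    by_cases hjj : js = j
    · rw [hjj]; exact hT.1 j hjO
    · have hle : rk i js ≤ rk i j := by
        rw [← hsame i hine]; exact hjsmin j hremj
      have hlt : rk i js < rk i j := lt_of_le_of_ne hle (fun hc => hjj (hrk i hc))
      have hnot : ¬ 0 < E.rem js s0 := fun hc =>
        absurd (E.eats_min hs00.le hike hc) (not_le.mpr hlt)
      have hz : E.rem js s0 = 0 := le_antisymm (not_lt.mp hnot) (E.rem_nonneg js hs00.le)
      exact E.rem_stay js hs00.le hs0T hz
  have hsubset : ({i1, i2, i3} : Finset (Fin n)) ⊆ Finset.univ.filter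
      (fun i => ∃ j', E.rem j' T = 0 ∧ E'.eats i s = some j') := by
    intro i hi
    simp only [Finset.mem_insert, Finset.mem_singleton] at hi
    rcases hi with rfl | rfl | rfl
    · exact Finset.mem_filter.mpr ⟨Finset.mem_univ _, ⟨j, hT.1 j hjO, hje⟩⟩
    · exact Finset.mem_filter.mpr ⟨Finset.mem_univ _, hGP _ hi2⟩
    · exact Finset.mem_filter.mpr ⟨Finset.mem_univ _, hGP _ hi3⟩
  have hne21 : i2 ≠ i1 := Finset.ne_of_mem_erase hi2
  have hne31 : i3 ≠ i1 := Finset.ne_of_mem_erase hi3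
  have hcard3 : ({i1, i2, i3} : Finset (Fin n)).card = 3 := by
    rw [Finset.card_insert_of_notMem (by simp [Ne.symm hne21, Ne.symm hne31]),
      Finset.card_insert_of_notMem (by simp [hne23]), Finset.card_singleton]
  calc (3:ℕ) = ({i1, i2, i3} : Finset (Fin n)).card := hcard3.symm
    _ ≤ _ := Finset.card_le_card hsubset
end Eaters

end PSExec
namespace PSExec

open scoped ENNReal

section Final

variable {n m : ℕ} {rk rk' : Fin n → Fin m → ℕ}
variable (E : PSExec n m rk (fun _ _ => True)) (E' : PSExec n m rk' (fun _ _ => True))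

lemma mult3 {S : Set ℝ} {G : Fin n → Set ℝ}
    (hG : ∀ i, MeasurableSet (G i)) (hS : MeasurableSet S)
    (hmulti : ∀ s ∈ S, ∃ a b c : Fin n, a ≠ b ∧ a ≠ c ∧ b ≠ c ∧ s ∈ G a ∧ s ∈ G b ∧ s ∈ G c) :
    3 * volume S ≤ ∑ i : Fin n, volume (G i) := by
  have h1 : ∑ i : Fin n, volume (G i)
      = ∫⁻ s : ℝ, ∑ i : Fin n, Set.indicator (G i) (fun _ => (1:ℝ≥0∞)) s := by
    rw [MeasureTheory.lintegral_finset_sum]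
    · exact Finset.sum_congr rfl (fun i _ => by
        rw [MeasureTheory.lintegral_indicator_const (hG i) 1, one_mul])
    · exact fun i _ => measurable_const.indicator (hG i)
  have h2 : (3:ℝ≥0∞) * volume S = ∫⁻ s : ℝ, Set.indicator S (fun _ => (3:ℝ≥0∞)) s := by
    rw [MeasureTheory.lintegral_indicator_const hS 3]
  rw [h1, h2]
  apply MeasureTheory.lintegral_mono
  intro s
  by_cases hs : s ∈ S
  · rw [Set.indicator_of_mem hs]
    obtain ⟨a, b, c, hab, hac, hbc, ha, hb, hc⟩ := hmulti s hs
    have hstep : (3:ℝ≥0∞) = ∑ i ∈ ({a, b, c} : Finset (Fin n)),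
        Set.indicator (G i) (fun _ => (1:ℝ≥0∞)) s := by
      rw [show ({a, b, c} : Finset (Fin n)) = insert a (insert b {c}) from rfl,
        Finset.sum_insert (by simp [hab, hac]), Finset.sum_insert (by simp [hbc]),
        Finset.sum_singleton, Set.indicator_of_mem ha, Set.indicator_of_mem hb,
        Set.indicator_of_mem hc]
      norm_num
    rw [hstep]
    exact Finset.sum_le_sum_of_subset (Finset.subset_univ _)
  · rw [Set.indicator_of_notMem hs]
    exact zero_le

lemma utility_eq (hmn : m ≤ n) (i1 : Fin n) (Obar : Finset (Fin m)) :
    E.utility (dicho Obar) i1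
      = (volume {s : ℝ | 0 < s ∧ ∃ j ∈ Obar, E.eats i1 s = some j}).toReal := by
  have hAsub : ∀ j : Fin m, {s : ℝ | 0 < s ∧ E.eats i1 s = some j} ⊆ Set.Ioo 0 2 := by
    intro j s hs
    refine ⟨hs.1, ?_⟩
    have hpos := E.eats_pos hs.1.le hs.2
    by_contra hc; push_neg at hc
    have h2 := E.rem_stay j (by norm_num) hc (E.rem_two hmn j)
    linarith
  have hmeasA : ∀ j : Fin m, MeasurableSet {s : ℝ | 0 < s ∧ E.eats i1 s = some j} := by
    intro j
    have h : {s : ℝ | 0 < s ∧ E.eats i1 s = some j}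
        = Set.Ioi 0 ∩ {t : ℝ | E.eats i1 t = some j} := by
      ext s; simp only [Set.mem_setOf_eq, Set.mem_inter_iff, Set.mem_Ioi]
    rw [h]; exact measurableSet_Ioi.inter (E.meas i1 j)
  have hfin : ∀ j : Fin m, volume {s : ℝ | 0 < s ∧ E.eats i1 s = some j} ≠ ⊤ := by
    intro j hc
    have h2 : volume {s : ℝ | 0 < s ∧ E.eats i1 s = some j} ≤ volume (Set.Ioo (0:ℝ) 2) :=
      measure_mono (hAsub j)
    rw [hc] at h2
    simp [Real.volume_Ioo] at h2
  have h1 : E.utility (dicho Obar) i1 = ∑ j ∈ Obar, E.alloc i1 j := by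
    rw [utility]
    have h2 : ∀ j : Fin m, dicho Obar j * E.alloc i1 j
        = if j ∈ Obar then E.alloc i1 j else 0 := by
      intro j; rw [dicho]; split <;> simp
    rw [Finset.sum_congr rfl (fun j _ => h2 j), Finset.sum_ite_mem, Finset.univ_inter]
  have hdisj : (↑Obar : Set (Fin m)).PairwiseDisjoint
      (fun j => {s : ℝ | 0 < s ∧ E.eats i1 s = some j}) := by
    intro j1 _ j2 _ hne
    rw [Function.onFun, Set.disjoint_left]
    rintro s ⟨_, h1⟩ ⟨_, h2⟩
    rw [h1] at h2; exact hne (Option.some_inj.mp h2)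
  have hun : (⋃ j ∈ Obar, {s : ℝ | 0 < s ∧ E.eats i1 s = some j})
      = {s : ℝ | 0 < s ∧ ∃ j ∈ Obar, E.eats i1 s = some j} := by
    ext s
    simp only [Set.mem_iUnion, Set.mem_setOf_eq]
    constructor
    · rintro ⟨j, hj, h1, h2⟩; exact ⟨h1, j, hj, h2⟩
    · rintro ⟨h1, j, hj, h2⟩; exact ⟨j, hj, h1, h2⟩
  rw [h1]
  unfold alloc
  rw [← ENNReal.toReal_sum (fun j _ => hfin j),
    ← measure_biUnion_finset hdisj (fun j _ => hmeasA j), hun]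

end Final

end PSExec
/-- dichotomous utilities, truthful exhaustion time `T` of the interest set with
`0 < T < 1/2`: the truthful utility equals `T` and no misreport yields more than `(3/2)·T`. -/
theorem ps_case_T_lt_half
    (n m : ℕ) (hnm : m ≤ n)
    (rk rk' : Fin n → Fin m → ℕ)
    (hrk : ∀ i, Function.Injective (rk i)) (hrk' : ∀ i, Function.Injective (rk' i))
    (i1 : Fin n) (hsame : ∀ i, i ≠ i1 → rk' i = rk i)
    (Obar : Finset (Fin m))
    (htruth : ∀ j ∈ Obar, ∀ j' ∉ Obar, rk i1 j < rk i1 j')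
    (E : PSExec n m rk (fun _ _ => True)) (E' : PSExec n m rk' (fun _ _ => True))
    (T : ℝ) (hT : E.exhaustTime Obar T) (hT0 : 0 < T) (hThalf : T < 1 / 2) :
    E.utility (dicho Obar) i1 = T ∧ E'.utility (dicho Obar) i1 ≤ (3 / 2) * T := by
  have hT2 : T ≤ 2 := by linarith
  constructor
  · -- truthful utility equals T
    rw [PSExec.utility_eq E hnm i1 Obar]
    have hUT : {s : ℝ | 0 < s ∧ ∃ j ∈ Obar, E.eats i1 s = some j} = Set.Ioo 0 T := by
      ext s
      simp only [Set.mem_setOf_eq, Set.mem_Ioo]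
      constructor
      · rintro ⟨h1, j, hj, h2⟩
        refine ⟨h1, ?_⟩
        by_contra hc; push_neg at hc
        have h3 := E.eats_pos h1.le h2
        have h4 := E.rem_stay j hT0.le hc (hT.1 j hj)
        linarith
      · rintro ⟨h1, h2⟩
        obtain ⟨j0, hj0, hj0pos⟩ := hT.2 s h1.le h2
        obtain ⟨jm, hjm, hjmpos, hjmmin⟩ := E.exists_eats i1 h1.le hj0pos
        refine ⟨h1, jm, ?_, hjm⟩
        by_contra hjmO
        exact absurd (hjmmin j0 hj0pos) (not_le.mpr (htruth j0 hj0 jm hjmO))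
    rw [hUT, Real.volume_Ioo, sub_zero, ENNReal.toReal_ofReal hT0.le]
  · -- misreport bound
    set D := Finset.univ.filter (fun j => E.rem j T = 0) with hD
    set S := {s : ℝ | T < s ∧ ∃ j ∈ Obar, E'.eats i1 s = some j} with hS
    set G : Fin n → Set ℝ := fun i =>
      {s : ℝ | s ∈ Set.Ioc T 2 ∧ ∃ j', E.rem j' T = 0 ∧ E'.eats i s = some j'} with hG
    have hS2 : S ⊆ Set.Ioc T 2 := by
      rintro s ⟨h1, j, hj, h2⟩
      refine ⟨h1, ?_⟩
      by_contra hc; push_neg at hc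
      have h3 := E'.eats_pos (hT0.le.trans h1.le) h2
      have h4 := E'.rem_stay j (by norm_num) hc.le (E'.rem_two hnm j)
      linarith
    have hmeasS : MeasurableSet S := by
      have heq : S = Set.Ioi T ∩ ⋃ j ∈ Obar, {t : ℝ | E'.eats i1 t = some j} := by
        ext s
        simp only [hS, Set.mem_setOf_eq, Set.mem_inter_iff, Set.mem_Ioi, Set.mem_iUnion]
        tauto
      rw [heq]
      exact measurableSet_Ioi.inter (MeasurableSet.biUnion Obar.countable_toSet
        (fun j _ => E'.meas i1 j))
    have hmeasG : ∀ i, MeasurableSet (G i) := by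
      intro i
      have heq : G i = Set.Ioc T 2 ∩ ⋃ j' ∈ D, {t : ℝ | E'.eats i t = some j'} := by
        ext s
        simp only [hG, hD, Set.mem_setOf_eq, Set.mem_inter_iff, Set.mem_iUnion,
          Finset.mem_filter, Finset.mem_univ, true_and]
        tauto
      rw [heq]
      exact measurableSet_Ioc.inter (MeasurableSet.biUnion D.countable_toSet
        (fun j' _ => E'.meas i j'))
    have hmulti : ∀ s ∈ S, ∃ a b c : Fin n,
        a ≠ b ∧ a ≠ c ∧ b ≠ c ∧ s ∈ G a ∧ s ∈ G b ∧ s ∈ G c := by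
      intro s hs
      obtain ⟨h1, j, hj, h2⟩ := hs
      have hsmem : s ∈ S := ⟨h1, j, hj, h2⟩
      have hsec := PSExec.second_eaters E E' hnm hrk i1 hsame Obar hT hT0 hThalf h1 hj h2
      obtain ⟨a, ha, b, hb, c, hc, hab, hac, hbc⟩ :=
        Finset.two_lt_card.mp (by omega : 2 < (Finset.univ.filter
          (fun i => ∃ j', E.rem j' T = 0 ∧ E'.eats i s = some j')).card)
      exact ⟨a, b, c, hab, hac, hbc,
        ⟨hS2 hsmem, (Finset.mem_filter.mp ha).2⟩,
        ⟨hS2 hsmem, (Finset.mem_filter.mp hb).2⟩,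
        ⟨hS2 hsmem, (Finset.mem_filter.mp hc).2⟩⟩
    have h3S := PSExec.mult3 hmeasG hmeasS hmulti
    have hGieq : ∀ i : Fin n, G i
        = ⋃ j' ∈ D, {s : ℝ | T < s ∧ s ≤ 2 ∧ E'.eats i s = some j'} := by
      intro i; ext s
      simp only [hG, hD, Set.mem_setOf_eq, Set.mem_iUnion, Finset.mem_filter, Finset.mem_univ,
        true_and, Set.mem_Ioc]
      tauto
    have hdisjB : ∀ i : Fin n, (↑D : Set (Fin m)).PairwiseDisjoint
        (fun j' => {s : ℝ | T < s ∧ s ≤ 2 ∧ E'.eats i s = some j'}) := by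
      intro i j1 _ j2 _ hne
      rw [Function.onFun, Set.disjoint_left]
      rintro s ⟨_, _, h1⟩ ⟨_, _, h2⟩
      rw [h1] at h2; exact hne (Option.some_inj.mp h2)
    have hGvol : ∀ i : Fin n, (volume (G i)).toReal
        = ∑ j' ∈ D, (volume {s : ℝ | T < s ∧ s ≤ 2 ∧ E'.eats i s = some j'}).toReal := by
      intro i
      rw [hGieq i, measure_biUnion_finset (hdisjB i) (fun j' _ => E'.measES i j' T 2),
        ENNReal.toReal_sum (fun j' _ => E'.volES_ne_top i j')]
    have hGsum : ∑ i : Fin n, (volume (G i)).toReal ≤ T := by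
      rw [Finset.sum_congr rfl (fun i _ => hGvol i), Finset.sum_comm]
      have hj' : ∀ j' ∈ D, ∑ i : Fin n,
          (volume {s : ℝ | T < s ∧ s ≤ 2 ∧ E'.eats i s = some j'}).toReal = E'.rem j' T := by
        intro j' _
        have h5 := E'.rem_sub j' hT0.le hT2
        rw [E'.rem_two hnm j', sub_zero] at h5
        linarith [h5]
      rw [Finset.sum_congr rfl hj']
      exact PSExec.Fbound E E' hnm hrk i1 hsame hT0.le
    have hfinS : volume S ≠ ⊤ := by
      intro hc
      have h6 : volume S ≤ volume (Set.Ioc T 2) := measure_mono hS2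
      rw [hc] at h6; simp [Real.volume_Ioc] at h6
    have hfinG : ∀ i : Fin n, volume (G i) ≠ ⊤ := by
      intro i hc
      have h6 : volume (G i) ≤ volume (Set.Ioc T 2) := measure_mono (fun s hs => hs.1)
      rw [hc] at h6; simp [Real.volume_Ioc] at h6
    have hfinsum : (∑ i : Fin n, volume (G i)) ≠ ⊤ :=
      (ENNReal.sum_lt_top.mpr (fun i _ => (hfinG i).lt_top)).ne
    have hSle : 3 * (volume S).toReal ≤ T := by
      calc 3 * (volume S).toReal = ((3 : ENNReal) * volume S).toReal := by
            rw [ENNReal.toReal_mul]; norm_num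
        _ ≤ (∑ i : Fin n, volume (G i)).toReal := ENNReal.toReal_mono hfinsum h3S
        _ = ∑ i : Fin n, (volume (G i)).toReal := ENNReal.toReal_sum (fun i _ => hfinG i)
        _ ≤ T := hGsum
    rw [PSExec.utility_eq E' hnm i1 Obar]
    have hsplit : {s : ℝ | 0 < s ∧ ∃ j ∈ Obar, E'.eats i1 s = some j} ⊆ Set.Ioc 0 T ∪ S := by
      rintro s ⟨h1, hex⟩
      rcases le_or_gt s T with h | h
      · exact Or.inl ⟨h1, h⟩
      · exact Or.inr ⟨h, hex⟩
    have hvol : volume {s : ℝ | 0 < s ∧ ∃ j ∈ Obar, E'.eats i1 s = some j}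
        ≤ ENNReal.ofReal T + volume S := by
      calc volume {s : ℝ | 0 < s ∧ ∃ j ∈ Obar, E'.eats i1 s = some j}
          ≤ volume (Set.Ioc 0 T ∪ S) := measure_mono hsplit
        _ ≤ volume (Set.Ioc (0:ℝ) T) + volume S := measure_union_le _ _
        _ = ENNReal.ofReal T + volume S := by rw [Real.volume_Ioc, sub_zero]
    have hrhsne : ENNReal.ofReal T + volume S ≠ ⊤ :=
      ENNReal.add_ne_top.mpr ⟨ENNReal.ofReal_ne_top, hfinS⟩
    have hfinal : (volume {s : ℝ | 0 < s ∧ ∃ j ∈ Obar, E'.eats i1 s = some j}).toReal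
        ≤ T + (volume S).toReal := by
      have h7 := ENNReal.toReal_mono hrhsne hvol
      rw [ENNReal.toReal_add ENNReal.ofReal_ne_top hfinS, ENNReal.toReal_ofReal hT0.le] at h7
      exact h7
    linarith
end

section
/- Consider the Probabilistic Serial mechanism with n ≥ m, agent 1 having dichotomous utilities with interest set O̅, the truthful profile, and let T be the exhaustion time of O̅ with 1/2 ≤ T < 2/3. Suppose there is an item o_{k'} ∈ O̅, eaten by agent 1 during the interval (t_1, t_1 + t_2] and exhausted at time t_1 + t_2, such that at the moment t_1 + t_2 only agent 1 and one other agent (called agent 2) are eating o_{k'}; set t_3 = T − (t_1 + t_2). Then every item that is exhausted in the time interval (t_1 + t_2, T] in the truthful profile has, at the moment it is exhausted, at least two eating agents other than agents 1 and 2. -/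
open MeasureTheory

namespace PSAux

open PSExec

variable {n m : ℕ} {rk : Fin n → Fin m → ℕ} {active : Fin n → ℝ → Prop}

/-- The set of eating instants, intersected with a time window, is measurable. -/
lemma meas_set (E : PSExec n m rk active) (i : Fin n) (j : Fin m) (t : ℝ) :
    MeasurableSet {s : ℝ | 0 < s ∧ s ≤ t ∧ E.eats i s = some j} := by
  have h : {s : ℝ | 0 < s ∧ s ≤ t ∧ E.eats i s = some j}
      = Set.Ioc 0 t ∩ {s | E.eats i s = some j} := by
    ext s; simp [Set.mem_Ioc, and_assoc]
  rw [h]; exact measurableSet_Ioc.inter (E.meas i j)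

lemma vol_le (E : PSExec n m rk active) (i : Fin n) (j : Fin m) (t : ℝ) :
    volume {s : ℝ | 0 < s ∧ s ≤ t ∧ E.eats i s = some j} ≤ ENNReal.ofReal t := by
  calc volume {s : ℝ | 0 < s ∧ s ≤ t ∧ E.eats i s = some j}
      ≤ volume (Set.Ioc (0:ℝ) t) :=
        measure_mono (fun s hs => Set.mem_Ioc.mpr ⟨hs.1, hs.2.1⟩)
    _ = ENNReal.ofReal (t - 0) := Real.volume_Ioc
    _ = ENNReal.ofReal t := by rw [sub_zero]

lemma vol_ne_top (E : PSExec n m rk active) (i : Fin n) (j : Fin m) (t : ℝ) :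
    volume {s : ℝ | 0 < s ∧ s ≤ t ∧ E.eats i s = some j} ≠ ⊤ :=
  ne_top_of_le_ne_top ENNReal.ofReal_ne_top (vol_le E i j t)

lemma toReal_vol_le (E : PSExec n m rk active) (i : Fin n) (j : Fin m) {t : ℝ}
    (ht : 0 ≤ t) :
    (volume {s : ℝ | 0 < s ∧ s ≤ t ∧ E.eats i s = some j}).toReal ≤ t := by
  have := ENNReal.toReal_mono ENNReal.ofReal_ne_top (vol_le E i j t)
  rwa [ENNReal.toReal_ofReal ht] at this

lemma toReal_vol_nonneg (E : PSExec n m rk active) (i : Fin n) (j : Fin m) (t : ℝ) :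
    0 ≤ (volume {s : ℝ | 0 < s ∧ s ≤ t ∧ E.eats i s = some j}).toReal :=
  ENNReal.toReal_nonneg

/-- Remaining supply is antitone in time. -/
lemma rem_anti (E : PSExec n m rk active) (j : Fin m) {s t : ℝ}
    (hs : 0 ≤ s) (hst : s ≤ t) : E.rem j t ≤ E.rem j s := by
  rw [E.rem_def j s hs, E.rem_def j t (hs.trans hst)]
  have h : ∀ i ∈ Finset.univ,
      (volume {u : ℝ | 0 < u ∧ u ≤ s ∧ E.eats i u = some j}).toReal ≤
      (volume {u : ℝ | 0 < u ∧ u ≤ t ∧ E.eats i u = some j}).toReal := by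
    intro i _
    exact ENNReal.toReal_mono (vol_ne_top E i j t)
      (measure_mono (fun u hu => ⟨hu.1, hu.2.1.trans hst, hu.2.2⟩))
  have := Finset.sum_le_sum h
  linarith

/-- Once an agent eats an item, it keeps eating it as long as the item remains. -/
lemma persist (E : PSExec n m rk (fun _ _ => True)) (i : Fin n) (j : Fin m) {s u : ℝ}
    (hs : 0 ≤ s) (hsu : s ≤ u) (h : E.eats i s = some j) (hrem : 0 < E.rem j u) :
    E.eats i u = some j := by
  have h1 := (E.eats_iff i s hs trivial j).mp h
  exact (E.eats_iff i u (hs.trans hsu) trivial j).mpr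
    ⟨hrem, fun j' hj' => h1.2 j' (lt_of_lt_of_le hj' (rem_anti E j' hs hsu))⟩

/-- Anyone who ever ate an item before its exhaustion is eating it at the exhaustion moment. -/
lemma eatsAt_of_eats (E : PSExec n m rk (fun _ _ => True)) (i : Fin n) (j : Fin m)
    {s τ : ℝ} (hs : 0 < s) (hsτ : s < τ) (hexh : E.exhaustedAt j τ)
    (h : E.eats i s = some j) : E.eatsAt i j τ := by
  refine ⟨τ - s, by linarith, fun u hu1 hu2 => ?_⟩
  have hu1' : s < u := by linarith
  exact persist E i j hs.le hu1'.le h (hexh.2.2 u (by linarith) hu2)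

/-- An agent not eating `j` at its exhaustion moment never ate it. -/
lemma vol_zero_of_not_eatsAt (E : PSExec n m rk (fun _ _ => True)) (i : Fin n) (j : Fin m)
    {τ : ℝ} (hexh : E.exhaustedAt j τ) (h : ¬ E.eatsAt i j τ) :
    (volume {s : ℝ | 0 < s ∧ s ≤ τ ∧ E.eats i s = some j}).toReal = 0 := by
  have hempty : {s : ℝ | 0 < s ∧ s ≤ τ ∧ E.eats i s = some j} = ∅ := by
    rw [Set.eq_empty_iff_forall_notMem]
    rintro s ⟨h1, h2, h3⟩
    rcases lt_or_eq_of_le h2 with h2 | h2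
    · exact h (eatsAt_of_eats E i j h1 h2 hexh h3)
    · subst h2
      have := ((E.eats_iff i s (le_of_lt h1) trivial j).mp h3).1
      rw [hexh.2.1] at this
      exact lt_irrefl 0 this
  rw [hempty, measure_empty, ENNReal.toReal_zero]

/-- Total consumption of an exhausted item is 1. -/
lemma sum_eq_one (E : PSExec n m rk (fun _ _ => True)) (j : Fin m) {τ : ℝ}
    (hτ : 0 ≤ τ) (h : E.rem j τ = 0) :
    ∑ i : Fin n, (volume {s : ℝ | 0 < s ∧ s ≤ τ ∧ E.eats i s = some j}).toReal = 1 := by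
  have := E.rem_def j τ hτ
  rw [h] at this
  linarith

/-- Disjointness bound: total time spent by one agent on two different items. -/
lemma two_items_le (E : PSExec n m rk active) (i : Fin n) (j j' : Fin m) (hjj' : j ≠ j')
    {t t' τ : ℝ} (ht : t ≤ τ) (ht' : t' ≤ τ) (hτ : 0 ≤ τ) :
    (volume {s : ℝ | 0 < s ∧ s ≤ t ∧ E.eats i s = some j}).toReal +
    (volume {s : ℝ | 0 < s ∧ s ≤ t' ∧ E.eats i s = some j'}).toReal ≤ τ := by
  set A := {s : ℝ | 0 < s ∧ s ≤ t ∧ E.eats i s = some j}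
  set B := {s : ℝ | 0 < s ∧ s ≤ t' ∧ E.eats i s = some j'}
  have hdisj : Disjoint A B := by
    rw [Set.disjoint_left]
    rintro s ⟨_, _, h1⟩ ⟨_, _, h2⟩
    rw [h1] at h2
    exact hjj' (Option.some_injective _ h2)
  have hAB : volume A + volume B = volume (A ∪ B) :=
    (measure_union hdisj (meas_set E i j' t')).symm
  have hsub : volume (A ∪ B) ≤ ENNReal.ofReal τ := by
    have hmem : A ∪ B ⊆ Set.Ioc 0 τ := by
      rintro s (⟨h1, h2, _⟩ | ⟨h1, h2, _⟩)
      · exact Set.mem_Ioc.mpr ⟨h1, h2.trans ht⟩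
      · exact Set.mem_Ioc.mpr ⟨h1, h2.trans ht'⟩
    calc volume (A ∪ B) ≤ volume (Set.Ioc (0:ℝ) τ) := measure_mono hmem
      _ = ENNReal.ofReal τ := by rw [Real.volume_Ioc, sub_zero]
  have hfin : volume A ≠ ⊤ := vol_ne_top E i j t
  have hfin' : volume B ≠ ⊤ := vol_ne_top E i j' t'
  have : (volume A).toReal + (volume B).toReal = (volume A + volume B).toReal :=
    (ENNReal.toReal_add hfin hfin').symm
  rw [this, hAB]
  have := ENNReal.toReal_mono ENNReal.ofReal_ne_top hsub
  rwa [ENNReal.toReal_ofReal hτ] at this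

end PSAux

/-- in the truthful profile with `1/2 ≤ T < 2/3`, if item `o_{k'}` is eaten by
agent 1 during `(t₁, t₁+t₂]`, is exhausted at `t₁+t₂`, and at that moment only agents 1 and 2
are eating it, then every item exhausted in `(t₁+t₂, T]` has, at its exhaustion moment, at
least two eating agents other than agents 1 and 2. -/
theorem o3_items_have_two_other_eaters
    (n m : ℕ) (hnm : m ≤ n)
    (rk : Fin n → Fin m → ℕ) (hrk : ∀ i, Function.Injective (rk i))
    (i1 i2 : Fin n) (hi12 : i1 ≠ i2)
    (Obar : Finset (Fin m))
    (htruth : ∀ j ∈ Obar, ∀ j' ∉ Obar, rk i1 j < rk i1 j')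
    (E : PSExec n m rk (fun _ _ => True))
    (T : ℝ) (hT : E.exhaustTime Obar T) (hT1 : 1 / 2 ≤ T) (hT2 : T < 2 / 3)
    (ok' : Fin m) (hok' : ok' ∈ Obar)
    (t1 t2 : ℝ) (ht1 : 0 ≤ t1) (ht2 : 0 < t2)
    (heat1 : ∀ s : ℝ, t1 < s → s < t1 + t2 → E.eats i1 s = some ok')
    (hexh : E.exhaustedAt ok' (t1 + t2))
    (heaters : {i : Fin n | E.eatsAt i ok' (t1 + t2)} = {i1, i2}) :
    ∀ j : Fin m, ∀ τ : ℝ, t1 + t2 < τ → τ ≤ T → E.exhaustedAt j τ →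
      2 ≤ Set.ncard {i : Fin n | i ≠ i1 ∧ i ≠ i2 ∧ E.eatsAt i j τ} := by
  classical
  intro j τ hτ1 hτ2 hexhj
  by_contra hcon
  push_neg at hcon
  have ht12 : (0:ℝ) < t1 + t2 := by linarith
  have hτpos : (0:ℝ) < τ := lt_trans ht12 hτ1
  have hjok : j ≠ ok' := by
    intro h; subst h
    have := hexhj.2.2 (t1 + t2) ht12.le hτ1
    rw [hexh.2.1] at this; exact lt_irrefl 0 this
  set f : Fin n → ℝ :=
    fun i => (volume {s : ℝ | 0 < s ∧ s ≤ τ ∧ E.eats i s = some j}).toReal with hf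
  set g : Fin n → ℝ :=
    fun i => (volume {s : ℝ | 0 < s ∧ s ≤ t1 + t2 ∧ E.eats i s = some ok'}).toReal with hg
  have hsumf : ∑ i, f i = 1 := PSAux.sum_eq_one E j hτpos.le hexhj.2.1
  have hsumg : ∑ i, g i = 1 := PSAux.sum_eq_one E ok' ht12.le hexh.2.1
  have hg0 : ∀ i, i ≠ i1 → i ≠ i2 → g i = 0 := by
    intro i h1 h2
    apply PSAux.vol_zero_of_not_eatsAt E i ok' hexh
    intro h
    have hmem : i ∈ ({i1, i2} : Set (Fin n)) := heaters ▸ h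
    rcases hmem with h' | h'
    · exact h1 h'
    · exact h2 h'
  have hgsum : g i1 + g i2 = 1 := by
    have h1 : ∑ i ∈ ({i1, i2} : Finset (Fin n)), g i = ∑ i, g i :=
      Finset.sum_subset (Finset.subset_univ _) (fun x _ hx => by
        simp only [Finset.mem_insert, Finset.mem_singleton] at hx
        push_neg at hx
        exact hg0 x hx.1 hx.2)
    rw [Finset.sum_pair hi12] at h1
    rw [h1, hsumg]
  have hb1 : f i1 + g i1 ≤ τ :=
    PSAux.two_items_le E i1 j ok' hjok (le_refl τ) hτ1.le hτpos.le
  have hb2 : f i2 + g i2 ≤ τ :=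
    PSAux.two_items_le E i2 j ok' hjok (le_refl τ) hτ1.le hτpos.le
  -- the sum over agents other than i1, i2
  set A : Finset (Fin n) := Finset.univ \ ({i1, i2} : Finset (Fin n)) with hA
  have hsplit : ∑ i ∈ A, f i + ∑ i ∈ ({i1, i2} : Finset (Fin n)), f i = ∑ i, f i :=
    Finset.sum_sdiff (Finset.subset_univ _)
  rw [Finset.sum_pair hi12] at hsplit
  set F : Finset (Fin n) := A.filter (fun i => E.eatsAt i j τ) with hF
  have hAF : ∑ i ∈ F, f i = ∑ i ∈ A, f i :=
    Finset.sum_filter_of_ne (fun i _ hfi => by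
      by_contra hcontra
      exact hfi (PSAux.vol_zero_of_not_eatsAt E i j hexhj hcontra))
  have hFset : (↑F : Set (Fin n)) = {i : Fin n | i ≠ i1 ∧ i ≠ i2 ∧ E.eatsAt i j τ} := by
    ext i
    simp only [hF, hA, Finset.coe_filter, Finset.mem_sdiff, Finset.mem_univ, true_and,
      Finset.mem_insert, Finset.mem_singleton, Set.mem_setOf_eq]
    constructor
    · rintro ⟨h1, h2⟩
      push_neg at h1
      exact ⟨h1.1, h1.2, h2⟩
    · rintro ⟨h1, h2, h3⟩
      exact ⟨by push_neg; exact ⟨h1, h2⟩, h3⟩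
  have hFcard : F.card ≤ 1 := by
    have := Set.ncard_coe_finset F
    rw [hFset] at this
    omega
  have hsumF : ∑ i ∈ F, f i ≤ τ := by
    have h1 : ∑ i ∈ F, f i ≤ F.card • τ :=
      Finset.sum_le_card_nsmul F f τ (fun i _ => PSAux.toReal_vol_le E i j hτpos.le)
    rw [nsmul_eq_mul] at h1
    have h2 : (F.card : ℝ) ≤ 1 := by exact_mod_cast hFcard
    nlinarith
  linarith [hsumF, hAF, hsplit, hsumf, hgsum, hb1, hb2, hτ2, hT2]
end
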